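/- arXiv:1309.6233 — 3 statements merged into one kernel-verified Lean document; each statement's English description precedes it below -/
import Mathlib

section
/- (Classification of homogeneous average-free q-valued harmonic functions in the plane) Suppose u = (u_1,...,u_q) ∈ C^{1;q}(R^2) is average-free, each u_l is harmonic on R^2 ∖ ([0,∞)×{0}), the components match cyclically across the slit, and u is homogeneous of some degree σ > 0. Then σ = k/q for some integer k ≥ 1 with q not dividing k, and u_l(r e^{iθ}) = Re(c r^{k/q} e^{i (k/q)(θ + 2(l-1)π)}) for r ≥ 0, θ ∈ [0,2π), l = 1,...,q, for some constant c ∈ C. In particular if additionally u ∈ C^{1;q} (so σ ≥ 1 with σ ≠ 1 forced by average-freeness for C^1 regularity at 0), then σ ≥ 1 + 1/q. -/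
open Set Complex
open scoped BigOperators Real Topology

noncomputable section

/-- The positive slit `[0,∞) × {0} ⊆ ℝ² = ℂ`. -/
def slitPC : Set ℂ := {z | z.im = 0 ∧ 0 ≤ z.re}

/-- The negative slit `(-∞,0] × {0} ⊆ ℝ² = ℂ`. -/
def slitMC : Set ℂ := {z | z.im = 0 ∧ z.re ≤ 0}

/-- `q`-valued `C^k` regularity (`C^{k;q}(Ω)`) on a planar domain `Ω ⊆ ℝ² = ℂ`: each `u_l`
is `C^k` off the positive slit; there is a cyclically relabelled tuple `v` (`v_l = u_l` on
the lower half-plane, `v_l = u_{l+1}` on the upper half-plane) that is `C^k` off the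
negative slit, encoding the cyclic matching of all derivatives up to order `k` across the
slit; and each `u_l` admits one-sided `C^k` extensions to the closed half-planes. -/
def IsCkqC (q : ℕ) [NeZero q] (k : ℕ∞) (Ω : Set ℂ) (u : Fin q → ℂ → ℝ) : Prop :=
  (∀ l, ContDiffOn ℝ k (u l) (Ω \ slitPC)) ∧
  (∃ v : Fin q → ℂ → ℝ,
    (∀ l, ContDiffOn ℝ k (v l) (Ω \ slitMC)) ∧
    (∀ l, ∀ z ∈ Ω, z.im < 0 → v l z = u l z) ∧
    (∀ l, ∀ z ∈ Ω, 0 < z.im → v l z = u (l + 1) z)) ∧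
  (∃ U L : Fin q → ℂ → ℝ,
    (∀ l, ContDiffOn ℝ k (U l) (Ω ∩ {z | 0 ≤ z.im})) ∧
    (∀ l, ContDiffOn ℝ k (L l) (Ω ∩ {z | z.im ≤ 0})) ∧
    (∀ l, ∀ z ∈ Ω, 0 < z.im → U l z = u l z) ∧
    (∀ l, ∀ z ∈ Ω, z.im < 0 → L l z = u l z))


namespace HHC

open Filter Asymptotics

def S : Set ℂ := {z : ℂ | z ∉ slitPC}

lemma isOpen_S : IsOpen S := by
  have h1 : IsClosed slitPC := by
    have : slitPC = {z : ℂ | z.im = 0} ∩ {z : ℂ | 0 ≤ z.re} := rfl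
    rw [this]
    exact (isClosed_eq Complex.continuous_im continuous_const).inter
      (isClosed_le continuous_const Complex.continuous_re)
  have : S = slitPCᶜ := rfl
  rw [this]; exact h1.isOpen_compl

lemma smul_mem_S {t : ℝ} (ht : 0 < t) {z : ℂ} (hz : z ∈ S) : t • z ∈ S := by
  intro h
  apply hz
  rcases h with ⟨h1, h2⟩
  rw [Complex.smul_im] at h1
  rw [Complex.smul_re] at h2
  constructor
  · exact (mul_eq_zero.mp h1).resolve_left (ne_of_gt ht)
  · exact nonneg_of_mul_nonneg_right h2 ht

lemma exp_mem_S {θ : ℝ} (h1 : 0 < θ) (h2 : θ < 2 * π) : Complex.exp (θ * Complex.I) ∈ S := by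
  intro h
  rcases h with ⟨him, hre⟩
  rw [Complex.exp_ofReal_mul_I_im] at him
  rw [Complex.exp_ofReal_mul_I_re] at hre
  rcases Real.sin_eq_zero_iff.mp him with ⟨n, hn⟩
  have hπ : (0:ℝ) < π := Real.pi_pos
  have hn1 : n = 1 := by
    rcases lt_trichotomy n 1 with h | h | h
    · exfalso
      have : (n:ℝ) ≤ 0 := by
        have : n ≤ 0 := by omega
        exact_mod_cast this
      nlinarith
    · exact h
    · exfalso
      have : (2:ℝ) ≤ (n:ℝ) := by exact_mod_cast h
      nlinarith
  rw [hn1] at hn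
  simp at hn
  rw [← hn] at hre
  simp [Real.cos_pi] at hre
  linarith


/-- The complexified gradient `∂x f - i ∂y f`. -/
def G (f : ℂ → ℝ) (z : ℂ) : ℂ :=
  ((fderiv ℝ f z 1 : ℝ) : ℂ) - (fderiv ℝ f z Complex.I) • Complex.I

lemma fderiv_eval (f : ℂ → ℝ) (z w : ℂ) :
    fderiv ℝ f z w = fderiv ℝ f z 1 * w.re + fderiv ℝ f z Complex.I * w.im := by
  have hw : w = w.re • (1:ℂ) + w.im • Complex.I := by
    simp [Complex.real_smul]
  conv_lhs => rw [hw]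
  rw [map_add, map_smul, map_smul]
  simp only [smul_eq_mul]
  ring

lemma G_mul_re (f : ℂ → ℝ) (z w : ℂ) : (G f z * w).re = fderiv ℝ f z w := by
  rw [fderiv_eval]
  simp [G, Complex.mul_re, Complex.sub_re, Complex.sub_im, Complex.smul_re, Complex.smul_im]

lemma exists_CR (f : ℂ → ℝ) (hsm : ContDiffOn ℝ 2 f S)
    (hharm : ∀ z ∈ S, fderiv ℝ (fun w => fderiv ℝ f w 1) z 1 +
      fderiv ℝ (fun w => fderiv ℝ f w Complex.I) z Complex.I = 0)
    {z : ℂ} (hz : z ∈ S) :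
    ∃ L : ℂ →L[ℝ] ℂ, HasFDerivAt (G f) L z ∧ ∀ w, L (Complex.I * w) = Complex.I * L w := by
  have hnz : S ∈ 𝓝 z := isOpen_S.mem_nhds hz
  have hct : ContDiffAt ℝ 2 f z := hsm.contDiffAt hnz
  have h1 : ContDiffAt ℝ 1 (fderiv ℝ f) z := hct.fderiv_right (le_refl _)
  have hF : HasFDerivAt (fderiv ℝ f) (fderiv ℝ (fderiv ℝ f) z) z :=
    (h1.differentiableAt one_ne_zero).hasFDerivAt
  set F'' := fderiv ℝ (fderiv ℝ f) z with hF''def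
  have hev : ∀ᶠ y in 𝓝 z, HasFDerivAt f (fderiv ℝ f y) y := by
    filter_upwards [hnz] with y hy
    exact ((hsm.contDiffAt (isOpen_S.mem_nhds hy)).differentiableAt
      (by norm_num)).hasFDerivAt
  have hsymm : ∀ v w, F'' v w = F'' w v :=
    second_derivative_symmetric_of_eventually hev hF
  -- evaluation maps
  have hA : HasFDerivAt (fun w => fderiv ℝ f w 1)
      ((ContinuousLinearMap.apply ℝ ℝ (1:ℂ)).comp F'') z :=
    (ContinuousLinearMap.apply ℝ ℝ (1:ℂ)).hasFDerivAt.comp z hF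
  have hB : HasFDerivAt (fun w => fderiv ℝ f w Complex.I)
      ((ContinuousLinearMap.apply ℝ ℝ (Complex.I)).comp F'') z :=
    (ContinuousLinearMap.apply ℝ ℝ (Complex.I)).hasFDerivAt.comp z hF
  have hh : F'' 1 1 + F'' Complex.I Complex.I = 0 := by
    have e1 : fderiv ℝ (fun w => fderiv ℝ f w 1) z = (ContinuousLinearMap.apply ℝ ℝ (1:ℂ)).comp F'' := hA.fderiv
    have e2 : fderiv ℝ (fun w => fderiv ℝ f w Complex.I) z = (ContinuousLinearMap.apply ℝ ℝ (Complex.I)).comp F'' := hB.fderiv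
    have := hharm z hz
    rw [e1, e2] at this
    simpa using this
  set L : ℂ →L[ℝ] ℂ :=
    (Complex.ofRealCLM.comp ((ContinuousLinearMap.apply ℝ ℝ (1:ℂ)).comp F'')) -
      (((ContinuousLinearMap.apply ℝ ℝ (Complex.I)).comp F'').smulRight Complex.I) with hLdef
  have hLeval : ∀ w, L w = ((F'' w 1 : ℝ) : ℂ) - (F'' w Complex.I) • Complex.I := by
    intro w
    simp [hLdef]
  refine ⟨L, ?_, ?_⟩
  · have hGa : HasFDerivAt (fun w => ((fderiv ℝ f w 1 : ℝ) : ℂ))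
        (Complex.ofRealCLM.comp ((ContinuousLinearMap.apply ℝ ℝ (1:ℂ)).comp F'')) z :=
      Complex.ofRealCLM.hasFDerivAt.comp z hA
    have hGb : HasFDerivAt (fun w => (fderiv ℝ f w Complex.I) • Complex.I)
        ((((ContinuousLinearMap.apply ℝ ℝ (Complex.I)).comp F'')).smulRight Complex.I) z :=
      hB.smul_const Complex.I
    exact hGa.sub hGb
  · intro w
    have h1 : L 1 = ((F'' 1 1 : ℝ) : ℂ) - (F'' 1 Complex.I) • Complex.I := hLeval 1
    have hI : L Complex.I = ((F'' 1 Complex.I : ℝ) : ℂ) + (F'' 1 1) • Complex.I := by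
      rw [hLeval]
      rw [hsymm Complex.I 1]
      have : F'' Complex.I Complex.I = -F'' 1 1 := by linarith [hh]
      rw [this]
      simp [sub_eq_add_neg]
    have hLI : L Complex.I = Complex.I * L 1 := by
      rw [h1, hI]
      simp only [Complex.real_smul]
      linear_combination (((F'' 1) Complex.I : ℝ) : ℂ) * Complex.I_sq
    have hdec : ∀ v : ℂ, L v = v.re • L 1 + v.im • L Complex.I := by
      intro v
      have hv : v = v.re • (1:ℂ) + v.im • Complex.I := by
        simp [Complex.real_smul]
      conv_lhs => rw [hv]
      rw [map_add, map_smul, map_smul]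
    rw [hdec (Complex.I * w), hdec w, hLI]
    simp [Complex.mul_re, Complex.mul_im, Complex.real_smul]
    linear_combination (-(↑w.im * L 1)) * Complex.I_sq

variable {f : ℂ → ℝ} {σ : ℝ}

lemma diffAt (hsm : ContDiffOn ℝ 2 f S) {z : ℂ} (hz : z ∈ S) : DifferentiableAt ℝ f z :=
  (hsm.contDiffAt (isOpen_S.mem_nhds hz)).differentiableAt (by norm_num)

/-- homogeneity of the gradient -/
lemma fderiv_hom (hsm : ContDiffOn ℝ 2 f S)
    (hhomf : ∀ s : ℝ, 0 < s → ∀ z ∈ S, f (s • z) = s ^ σ * f z)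
    {t : ℝ} (ht : 0 < t) {z : ℂ} (hz : z ∈ S) (w : ℂ) :
    fderiv ℝ f (t • z) w = t ^ (σ - 1) * fderiv ℝ f z w := by
  have htz : t • z ∈ S := smul_mem_S ht hz
  have hmap : HasFDerivAt (fun y : ℂ => t • y) (t • ContinuousLinearMap.id ℝ ℂ) z := by
    exact ((ContinuousLinearMap.id ℝ ℂ).hasFDerivAt (x := z)).const_smul t
  have h1 : HasFDerivAt (fun y => f (t • y))
      ((fderiv ℝ f (t • z)).comp (t • ContinuousLinearMap.id ℝ ℂ)) z :=
    ((diffAt hsm htz).hasFDerivAt).comp z hmap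
  have h2 : HasFDerivAt (fun y => t ^ σ * f y) ((t ^ σ) • fderiv ℝ f z) z :=
    ((diffAt hsm hz).hasFDerivAt).const_mul (t ^ σ)
  have heq : (fun y => f (t • y)) =ᶠ[𝓝 z] (fun y => t ^ σ * f y) := by
    filter_upwards [isOpen_S.mem_nhds hz] with y hy
    exact hhomf t ht y hy
  have h1' : HasFDerivAt (fun y => t ^ σ * f y)
      ((fderiv ℝ f (t • z)).comp (t • ContinuousLinearMap.id ℝ ℂ)) z :=
    h1.congr_of_eventuallyEq heq.symm
  have := h1'.unique h2
  have happ := DFunLike.congr_fun this w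
  simp only [ContinuousLinearMap.comp_apply, ContinuousLinearMap.coe_smul',
    Pi.smul_apply, ContinuousLinearMap.id_apply, map_smul, smul_eq_mul] at happ
  have hts : t ^ (σ - 1) = t ^ σ / t := by
    rw [Real.rpow_sub ht, Real.rpow_one]
  rw [hts]
  rw [Complex.real_smul] at happ
  field_simp
  linear_combination happ

lemma G_hom (hsm : ContDiffOn ℝ 2 f S)
    (hhomf : ∀ s : ℝ, 0 < s → ∀ z ∈ S, f (s • z) = s ^ σ * f z)
    {t : ℝ} (ht : 0 < t) {z : ℂ} (hz : z ∈ S) :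
    G f (t • z) = (t ^ (σ - 1) : ℝ) • G f z := by
  unfold G
  rw [fderiv_hom hsm hhomf ht hz 1, fderiv_hom hsm hhomf ht hz Complex.I]
  simp only [smul_sub, Complex.real_smul, smul_smul]
  push_cast
  ring

lemma radial (hsm : ContDiffOn ℝ 2 f S)
    (hhomf : ∀ s : ℝ, 0 < s → ∀ z ∈ S, f (s • z) = s ^ σ * f z)
    {z : ℂ} (hz : z ∈ S) {L : ℂ →L[ℝ] ℂ} (hL : HasFDerivAt (G f) L z) :
    L z = ((σ - 1 : ℝ)) • G f z := by
  have hc : HasDerivAt (fun t : ℝ => t • z) z 1 := by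
    simpa using (hasDerivAt_id (1:ℝ)).smul_const z
  have hL' : HasFDerivAt (G f) L ((1:ℝ) • z) := by simpa using hL
  have h1 : HasDerivAt (fun t : ℝ => G f (t • z)) (L z) 1 := by
    simpa [Function.comp_def] using hL'.comp_hasDerivAt 1 hc
  have heq : (fun t : ℝ => G f (t • z)) =ᶠ[𝓝 (1:ℝ)] (fun t => (t ^ (σ-1) : ℝ) • G f z) := by
    filter_upwards [eventually_gt_nhds zero_lt_one] with t ht
    exact G_hom hsm hhomf ht hz
  have h2 : HasDerivAt (fun t : ℝ => (t ^ (σ-1) : ℝ) • G f z) (L z) 1 :=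
    h1.congr_of_eventuallyEq heq.symm
  have h3 : HasDerivAt (fun t : ℝ => (t ^ (σ-1) : ℝ) • G f z)
      (((σ-1) * (1:ℝ) ^ (σ-1-1)) • G f z) 1 :=
    (Real.hasDerivAt_rpow_const (Or.inl one_ne_zero)).smul_const (G f z)
  have := h2.unique h3
  rw [this, Real.one_rpow, mul_one]

lemma euler (hsm : ContDiffOn ℝ 2 f S)
    (hhomf : ∀ s : ℝ, 0 < s → ∀ z ∈ S, f (s • z) = s ^ σ * f z)
    {z : ℂ} (hz : z ∈ S) : σ * f z = (G f z * z).re := by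
  rw [G_mul_re]
  have hc : HasDerivAt (fun t : ℝ => t • z) z 1 := by
    simpa using (hasDerivAt_id (1:ℝ)).smul_const z
  have hd : HasFDerivAt f (fderiv ℝ f z) ((1:ℝ) • z) := by
    simpa using (diffAt hsm hz).hasFDerivAt
  have h1 : HasDerivAt (fun t : ℝ => f (t • z)) (fderiv ℝ f z z) 1 := by
    simpa [Function.comp_def] using hd.comp_hasDerivAt 1 hc
  have heq : (fun t : ℝ => f (t • z)) =ᶠ[𝓝 (1:ℝ)] (fun t => (t ^ σ : ℝ) * f z) := by
    filter_upwards [eventually_gt_nhds zero_lt_one] with t ht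
    exact hhomf t ht z hz
  have h2 : HasDerivAt (fun t : ℝ => (t ^ σ : ℝ) * f z) (fderiv ℝ f z z) 1 :=
    h1.congr_of_eventuallyEq heq.symm
  have h3 : HasDerivAt (fun t : ℝ => (t ^ σ : ℝ) * f z) ((σ * (1:ℝ) ^ (σ-1)) * f z) 1 :=
    (Real.hasDerivAt_rpow_const (Or.inl one_ne_zero)).mul_const (f z)
  have := h2.unique h3
  rw [this, Real.one_rpow, mul_one]

lemma hasDerivAt_cexpI (θ : ℝ) :
    HasDerivAt (fun t : ℝ => Complex.exp (t * Complex.I))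
      (Complex.I * Complex.exp (θ * Complex.I)) θ := by
  have h1 : HasDerivAt (fun t : ℝ => ((t : ℂ) * Complex.I)) Complex.I θ := by
    simpa using (Complex.ofRealCLM.hasDerivAt (x := θ)).mul_const Complex.I
  simpa [mul_comm] using h1.cexp

/-- the coefficient of the sheet -/
def coefA (f : ℂ → ℝ) (σ : ℝ) : ℂ :=
  G f (Complex.exp (π * Complex.I)) * Complex.exp (-(((σ - 1) * π : ℝ) : ℂ) * Complex.I)

/-- the angular function along the unit circle -/
lemma psi_eq (hsm : ContDiffOn ℝ 2 f S)
    (hharm : ∀ z ∈ S, fderiv ℝ (fun w => fderiv ℝ f w 1) z 1 +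
      fderiv ℝ (fun w => fderiv ℝ f w Complex.I) z Complex.I = 0)
    (hhomf : ∀ s : ℝ, 0 < s → ∀ z ∈ S, f (s • z) = s ^ σ * f z)
    {θ : ℝ} (h1 : 0 < θ) (h2 : θ < 2 * π) :
    G f (Complex.exp (θ * Complex.I)) =
      coefA f σ * Complex.exp ((((σ - 1) * θ : ℝ) : ℂ) * Complex.I) := by
  -- the auxiliary function h is locally constant on (0, 2π)
  set h : ℝ → ℂ := fun t =>
    G f (Complex.exp (t * Complex.I)) * Complex.exp (-(((σ - 1) * t : ℝ) : ℂ) * Complex.I) with hh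
  have key : ∀ t ∈ Ioo (0:ℝ) (2*π), HasDerivAt h 0 t := by
    intro t ht
    have htS : Complex.exp (t * Complex.I) ∈ S := exp_mem_S ht.1 ht.2
    obtain ⟨L, hL, hCR⟩ := exists_CR f hsm hharm htS
    have hψ : HasDerivAt (fun s : ℝ => G f (Complex.exp (s * Complex.I)))
        (L (Complex.I * Complex.exp (t * Complex.I))) t := by
      simpa [Function.comp_def] using hL.comp_hasDerivAt t (hasDerivAt_cexpI t)
    have hLval : L (Complex.I * Complex.exp (t * Complex.I)) =
        ((σ - 1 : ℝ) : ℂ) * Complex.I * G f (Complex.exp (t * Complex.I)) := by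
      rw [hCR, radial hsm hhomf htS hL]
      simp [Complex.real_smul]
      ring
    have hg : HasDerivAt (fun s : ℝ => Complex.exp (-(((σ - 1) * s : ℝ) : ℂ) * Complex.I))
        (-(((σ - 1) : ℝ) : ℂ) * Complex.I * Complex.exp (-(((σ - 1) * t : ℝ) : ℂ) * Complex.I)) t := by
      have hi : HasDerivAt (fun s : ℝ => (-(((σ - 1) * s : ℝ) : ℂ) * Complex.I))
          (-(((σ - 1) : ℝ) : ℂ) * Complex.I) t := by
        have : HasDerivAt (fun s : ℝ => ((s : ℝ) : ℂ)) 1 t := Complex.ofRealCLM.hasDerivAt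
        have h3 : HasDerivAt (fun s : ℝ => (((σ - 1) * s : ℝ) : ℂ)) (((σ - 1 : ℝ) : ℂ)) t := by
          simpa using ((this.const_mul (((σ - 1 : ℝ)) : ℂ)).congr_of_eventuallyEq
            (by filter_upwards with s; push_cast; ring))
        simpa using (h3.neg).mul_const Complex.I
      simpa [mul_comm] using hi.cexp
    have := (hψ.mul hg)
    rw [hLval] at this
    exact this.congr_deriv (by ring)
  have hconst : ∀ t ∈ Ioo (0:ℝ) (2*π), h t = h π := by
    intro t ht
    have hπ : π ∈ Ioo (0:ℝ) (2*π) := ⟨Real.pi_pos, by linarith [Real.pi_pos]⟩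
    have := (convex_Ioo (0:ℝ) (2*π)).norm_image_sub_le_of_norm_hasDerivWithin_le (C := 0)
      (fun x hx => (key x hx).hasDerivWithinAt) (fun x hx => by simp) hπ ht
    have h0 : ‖h t - h π‖ ≤ 0 := by simpa using this
    have := le_antisymm h0 (norm_nonneg _)
    rwa [norm_eq_zero, sub_eq_zero] at this
  have hθ : θ ∈ Ioo (0:ℝ) (2*π) := ⟨h1, h2⟩
  have := hconst θ hθ
  rw [hh] at this
  simp only at this
  -- h θ = h π ; unfold
  have hexp : Complex.exp (-(((σ - 1) * θ : ℝ) : ℂ) * Complex.I) *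
      Complex.exp ((((σ - 1) * θ : ℝ) : ℂ) * Complex.I) = 1 := by
    rw [← Complex.exp_add]; simp
  calc G f (Complex.exp (θ * Complex.I))
      = G f (Complex.exp (θ * Complex.I)) *
        (Complex.exp (-(((σ - 1) * θ : ℝ) : ℂ) * Complex.I) *
         Complex.exp ((((σ - 1) * θ : ℝ) : ℂ) * Complex.I)) := by rw [hexp, mul_one]
    _ = (G f (Complex.exp (θ * Complex.I)) *
         Complex.exp (-(((σ - 1) * θ : ℝ) : ℂ) * Complex.I)) *
        Complex.exp ((((σ - 1) * θ : ℝ) : ℂ) * Complex.I) := by ring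
    _ = (G f (Complex.exp (π * Complex.I)) *
         Complex.exp (-(((σ - 1) * π : ℝ) : ℂ) * Complex.I)) *
        Complex.exp ((((σ - 1) * θ : ℝ) : ℂ) * Complex.I) := by rw [this]
    _ = coefA f σ * Complex.exp ((((σ - 1) * θ : ℝ) : ℂ) * Complex.I) := rfl

/-- value of f in polar coordinates -/
lemma f_polar (hsm : ContDiffOn ℝ 2 f S)
    (hharm : ∀ z ∈ S, fderiv ℝ (fun w => fderiv ℝ f w 1) z 1 +
      fderiv ℝ (fun w => fderiv ℝ f w Complex.I) z Complex.I = 0)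
    (hhomf : ∀ s : ℝ, 0 < s → ∀ z ∈ S, f (s • z) = s ^ σ * f z)
    (hσ : 0 < σ)
    {r θ : ℝ} (hr : 0 < r) (h1 : 0 < θ) (h2 : θ < 2 * π) :
    f (r • Complex.exp (θ * Complex.I)) =
      r ^ σ * (coefA f σ / σ * Complex.exp (((σ * θ : ℝ) : ℂ) * Complex.I)).re := by
  have htS : Complex.exp (θ * Complex.I) ∈ S := exp_mem_S h1 h2
  rw [hhomf r hr _ htS]
  congr 1
  have he := euler hsm hhomf htS
  rw [psi_eq hsm hharm hhomf h1 h2] at he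
  have : coefA f σ * Complex.exp ((((σ - 1) * θ : ℝ) : ℂ) * Complex.I) *
      Complex.exp (θ * Complex.I) = coefA f σ * Complex.exp (((σ * θ : ℝ) : ℂ) * Complex.I) := by
    rw [mul_assoc, ← Complex.exp_add]
    congr 2
    push_cast
    ring
  rw [this] at he
  have hfz : f (Complex.exp (θ * Complex.I)) =
      (coefA f σ * Complex.exp (((σ * θ : ℝ) : ℂ) * Complex.I)).re / σ := by
    field_simp at he ⊢
    linarith [he]
  rw [hfz]
  rw [div_mul_eq_mul_div, Complex.div_ofReal_re]

lemma polar_rep {z : ℂ} (hz : z ∈ S) :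
    ∃ r θ : ℝ, 0 < r ∧ 0 < θ ∧ θ < 2 * π ∧ z = r • Complex.exp (θ * Complex.I) := by
  have hz0 : z ≠ 0 := by
    intro h
    exact hz (by simp [h, slitPC, Set.mem_setOf_eq])
  have harg : Complex.arg z ≠ 0 := by
    intro h
    rcases Complex.arg_eq_zero_iff.mp h with ⟨h1, h2⟩
    exact hz ⟨h2, h1⟩
  have habs : 0 < ‖z‖ := norm_pos_iff.mpr hz0
  have hbase : z = (‖z‖ : ℝ) • Complex.exp ((Complex.arg z : ℝ) * Complex.I) := by
    rw [Complex.real_smul]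
    exact (Complex.norm_mul_exp_arg_mul_I z).symm
  rcases lt_or_gt_of_ne harg with hneg | hpos
  · refine ⟨‖z‖, Complex.arg z + 2 * π, habs, ?_, ?_, ?_⟩
    · linarith [Complex.neg_pi_lt_arg z, Real.pi_pos]
    · linarith [Real.pi_pos]
    · have hce : Complex.exp (((z.arg + 2 * π : ℝ) : ℂ) * Complex.I) =
          Complex.exp ((z.arg : ℝ) * Complex.I) := by
        push_cast
        rw [add_mul, Complex.exp_add]
        simp [Complex.exp_two_pi_mul_I]
      rw [hce]
      exact hbase
  · exact ⟨‖z‖, Complex.arg z, habs, hpos, by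
      linarith [Complex.arg_le_pi z, Real.pi_pos], hbase⟩

lemma re_exp_zero {w : ℂ} {s t₁ t₂ : ℝ} (hs : s ≠ 0) (h12 : t₁ < t₂)
    (h : ∀ θ : ℝ, t₁ < θ → θ < t₂ → (w * Complex.exp (((s * θ : ℝ) : ℂ) * Complex.I)).re = 0) :
    w = 0 := by
  set θ0 := (t₁ + t₂) / 2 with hθ0
  set g : ℝ → ℝ := fun θ => (w * Complex.exp (((s * θ : ℝ) : ℂ) * Complex.I)).re with hg
  have hcurve : ∀ θ : ℝ, HasDerivAt (fun t : ℝ => w * Complex.exp (((s * t : ℝ) : ℂ) * Complex.I))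
      (w * Complex.exp (((s * θ : ℝ) : ℂ) * Complex.I) * (s * Complex.I)) θ := by
    intro θ
    have h0 : HasDerivAt (fun t : ℝ => ((s * t : ℝ) : ℂ) * Complex.I) ((s:ℂ) * Complex.I) θ := by
      have : HasDerivAt (fun t : ℝ => ((t : ℝ) : ℂ)) 1 θ := Complex.ofRealCLM.hasDerivAt
      have h3 : HasDerivAt (fun t : ℝ => (((s * t : ℝ)) : ℂ)) ((s : ℂ)) θ := by
        simpa using ((this.const_mul ((s : ℝ) : ℂ)).congr_of_eventuallyEq
          (by filter_upwards with x; push_cast; ring))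
      simpa using h3.mul_const Complex.I
    have := (h0.cexp).const_mul w
    exact this.congr_deriv (by ring)
  have hgderiv : ∀ θ : ℝ, HasDerivAt g
      ((w * Complex.exp (((s * θ : ℝ) : ℂ) * Complex.I) * (s * Complex.I)).re) θ := by
    intro θ
    exact (Complex.reCLM.hasFDerivAt.comp_hasDerivAt θ (hcurve θ))
  have hmem : θ0 ∈ Ioo t₁ t₂ := ⟨by simp [hθ0]; linarith, by simp [hθ0]; linarith⟩
  have hev : g =ᶠ[𝓝 θ0] (fun _ => (0:ℝ)) := by
    filter_upwards [isOpen_Ioo.mem_nhds hmem] with θ hθ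
    exact h θ hθ.1 hθ.2
  have hd0 : deriv g θ0 = 0 := by
    rw [hev.deriv_eq]
    simp
  have hval : g θ0 = 0 := h θ0 hmem.1 hmem.2
  have hW : (w * Complex.exp (((s * θ0 : ℝ) : ℂ) * Complex.I)).re = 0 := hval
  have hW2 : (w * Complex.exp (((s * θ0 : ℝ) : ℂ) * Complex.I) * (s * Complex.I)).re = 0 := by
    rw [← (hgderiv θ0).deriv]; exact hd0
  set W := w * Complex.exp (((s * θ0 : ℝ) : ℂ) * Complex.I) with hWdef
  have hWim : W.im = 0 := by
    have : (W * (s * Complex.I)).re = -s * W.im := by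
      simp [Complex.mul_re]
      ring
    rw [this] at hW2
    rcases mul_eq_zero.mp hW2 with h' | h'
    · exact absurd (neg_eq_zero.mp h') hs
    · exact h'
  have hWzero : W = 0 := by
    apply Complex.ext <;> simp [hW, hWim]
  have := mul_eq_zero.mp hWzero
  rcases this with h' | h'
  · exact h'
  · exact absurd h' (Complex.exp_ne_zero _)

lemma isOpen_Sv : IsOpen ((Set.univ : Set ℂ) \ slitMC) := by
  apply isOpen_univ.sdiff
  have : slitMC = {z : ℂ | z.im = 0} ∩ {z : ℂ | z.re ≤ 0} := rfl
  rw [this]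
  exact (isClosed_eq Complex.continuous_im continuous_const).inter
    (isClosed_le Complex.continuous_re continuous_const)

lemma G_congr_of_open {f₁ f₂ : ℂ → ℝ} {V : Set ℂ} (hV : IsOpen V)
    (heq : ∀ z ∈ V, f₁ z = f₂ z) {x : ℂ} (hx : x ∈ V) : G f₁ x = G f₂ x := by
  have hev : f₁ =ᶠ[𝓝 x] f₂ := by
    filter_upwards [hV.mem_nhds hx] with y hy using heq y hy
  unfold G
  rw [hev.fderiv_eq]

lemma continuousOn_G {v : ℂ → ℝ} (hv : ContDiffOn ℝ 1 v (Set.univ \ slitMC)) :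
    ContinuousOn (G v) (Set.univ \ slitMC) := by
  have hfd : ContinuousOn (fderiv ℝ v) (Set.univ \ slitMC) :=
    hv.continuousOn_fderiv_of_isOpen isOpen_Sv le_rfl
  have h1 : ContinuousOn (fun z => fderiv ℝ v z 1) (Set.univ \ slitMC) :=
    (ContinuousLinearMap.apply ℝ ℝ (1:ℂ)).continuous.comp_continuousOn hfd
  have h2 : ContinuousOn (fun z => fderiv ℝ v z Complex.I) (Set.univ \ slitMC) :=
    (ContinuousLinearMap.apply ℝ ℝ (Complex.I)).continuous.comp_continuousOn hfd
  exact (Complex.continuous_ofReal.comp_continuousOn h1).sub (h2.smul continuousOn_const)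

lemma continuous_curve : Continuous (fun θ : ℝ => Complex.exp ((θ : ℂ) * Complex.I)) :=
  Complex.continuous_exp.comp ((Complex.continuous_ofReal).mul continuous_const)

lemma matching {f g v : ℂ → ℝ} {σ : ℝ} {A B : ℂ}
    (hv : ContDiffOn ℝ 1 v (Set.univ \ slitMC))
    (hvf : ∀ z : ℂ, z.im < 0 → v z = f z)
    (hvg : ∀ z : ℂ, 0 < z.im → v z = g z)
    (hfA : ∀ θ : ℝ, 0 < θ → θ < 2 * π →
      G f (Complex.exp ((θ : ℂ) * Complex.I)) = A * Complex.exp ((((σ-1) * θ : ℝ) : ℂ) * Complex.I))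
    (hgB : ∀ θ : ℝ, 0 < θ → θ < 2 * π →
      G g (Complex.exp ((θ : ℂ) * Complex.I)) = B * Complex.exp ((((σ-1) * θ : ℝ) : ℂ) * Complex.I)) :
    B = A * Complex.exp ((((σ-1) * (2 * π) : ℝ) : ℂ) * Complex.I) := by
  have hπ : (0:ℝ) < π := Real.pi_pos
  have h1mem : (1 : ℂ) ∈ Set.univ \ slitMC := by
    constructor
    · trivial
    · intro h
      rcases h with ⟨_, h2⟩
      norm_num at h2
  have hGv1 : ContinuousAt (G v) 1 :=
    (continuousOn_G hv).continuousAt (isOpen_Sv.mem_nhds h1mem)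
  -- curve tends to 1 both from θ → 2π⁻ and θ → 0⁺
  have h2πe : Complex.exp (((2*π : ℝ) : ℂ) * Complex.I) = 1 := by
    push_cast
    exact Complex.exp_two_pi_mul_I
  have hc2 : Tendsto (fun θ : ℝ => Complex.exp ((θ : ℂ) * Complex.I)) (𝓝[<] (2*π)) (𝓝 1) := by
    have h := continuous_curve.tendsto (2*π)
    rw [h2πe] at h
    exact h.mono_left nhdsWithin_le_nhds
  have hc0 : Tendsto (fun θ : ℝ => Complex.exp ((θ : ℂ) * Complex.I)) (𝓝[>] (0:ℝ)) (𝓝 1) := by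
    have h := continuous_curve.tendsto 0
    simp only [Complex.ofReal_zero, zero_mul, Complex.exp_zero] at h
    exact h.mono_left nhdsWithin_le_nhds
  -- lower half equality
  have hlow : ∀ θ : ℝ, π < θ → θ < 2*π → G f (Complex.exp ((θ : ℂ) * Complex.I)) =
      G v (Complex.exp ((θ : ℂ) * Complex.I)) := by
    intro θ hθ1 hθ2
    refine G_congr_of_open (V := {z : ℂ | z.im < 0})
      (isOpen_lt Complex.continuous_im continuous_const) (fun z hz => (hvf z hz).symm) ?_
    simp only [Set.mem_setOf_eq, Complex.exp_ofReal_mul_I_im]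
    have : Real.sin (θ - π) > 0 := Real.sin_pos_of_pos_of_lt_pi (by linarith) (by linarith)
    rw [show θ = (θ - π) + π by ring, Real.sin_add_pi]
    linarith
  have hup : ∀ θ : ℝ, 0 < θ → θ < π → G g (Complex.exp ((θ : ℂ) * Complex.I)) =
      G v (Complex.exp ((θ : ℂ) * Complex.I)) := by
    intro θ hθ1 hθ2
    refine G_congr_of_open (V := {z : ℂ | 0 < z.im})
      (isOpen_lt continuous_const Complex.continuous_im) (fun z hz => (hvg z hz).symm) ?_
    simp only [Set.mem_setOf_eq, Complex.exp_ofReal_mul_I_im]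
    exact Real.sin_pos_of_pos_of_lt_pi hθ1 hθ2
  -- limit from below 2π
  have hF : Continuous (fun θ : ℝ => A * Complex.exp ((((σ-1) * θ : ℝ) : ℂ) * Complex.I)) := by
    exact continuous_const.mul (continuous_curve.comp (continuous_const.mul continuous_id))
  have hA2 : Tendsto (fun θ : ℝ => A * Complex.exp ((((σ-1) * θ : ℝ) : ℂ) * Complex.I))
      (𝓝[<] (2*π)) (𝓝 (A * Complex.exp ((((σ-1) * (2*π) : ℝ) : ℂ) * Complex.I))) :=
    (hF.tendsto (2*π)).mono_left nhdsWithin_le_nhds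
  have hGv2 : Tendsto (fun θ : ℝ => G v (Complex.exp ((θ : ℂ) * Complex.I)))
      (𝓝[<] (2*π)) (𝓝 (G v 1)) := hGv1.tendsto.comp hc2
  have hkey1 : G v 1 = A * Complex.exp ((((σ-1) * (2*π) : ℝ) : ℂ) * Complex.I) := by
    refine tendsto_nhds_unique ?_ hA2
    refine hGv2.congr' ?_
    filter_upwards [Ioo_mem_nhdsLT (show π < 2*π by linarith)] with θ hθ
    rw [← hlow θ hθ.1 hθ.2, hfA θ (by linarith [hθ.1]) hθ.2]
  have hB0 : Tendsto (fun θ : ℝ => B * Complex.exp ((((σ-1) * θ : ℝ) : ℂ) * Complex.I))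
      (𝓝[>] (0:ℝ)) (𝓝 B) := by
    have hFB : Continuous (fun θ : ℝ => B * Complex.exp ((((σ-1) * θ : ℝ) : ℂ) * Complex.I)) := by
      exact continuous_const.mul (continuous_curve.comp (continuous_const.mul continuous_id))
    have h := hFB.tendsto 0
    simp only [mul_zero, Complex.ofReal_zero, zero_mul, Complex.exp_zero, mul_one] at h
    exact h.mono_left nhdsWithin_le_nhds
  have hGv0 : Tendsto (fun θ : ℝ => G v (Complex.exp ((θ : ℂ) * Complex.I)))
      (𝓝[>] (0:ℝ)) (𝓝 (G v 1)) := hGv1.tendsto.comp hc0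
  have hkey2 : G v 1 = B := by
    refine tendsto_nhds_unique ?_ hB0
    refine hGv0.congr' ?_
    filter_upwards [Ioo_mem_nhdsGT hπ] with θ hθ
    rw [← hup θ hθ.1 hθ.2, hgB θ hθ.1 (by linarith [hθ.2])]
  rw [← hkey1, hkey2]

lemma I_mem_S : Complex.I ∈ S := by
  intro h
  rcases h with ⟨h1, _⟩
  simp at h1

lemma expI_mem_S {θ : ℝ} (h1 : 0 < θ) (h2 : θ < π) : Complex.exp ((θ:ℂ) * Complex.I) ∈ S := by
  intro h
  rcases h with ⟨him, _⟩
  rw [Complex.exp_ofReal_mul_I_im] at him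
  exact absurd him (ne_of_gt (Real.sin_pos_of_pos_of_lt_pi h1 h2))

lemma tendsto_rpow_sub_one_atTop {σ : ℝ} (hσ : σ < 1) :
    Tendsto (fun t : ℝ => t ^ (σ - 1)) (𝓝[>] (0:ℝ)) atTop := by
  have h1 : Tendsto (fun t : ℝ => (t⁻¹) ^ (1 - σ)) (𝓝[>] (0:ℝ)) atTop :=
    (tendsto_rpow_atTop (by linarith)).comp tendsto_inv_nhdsGT_zero
  refine h1.congr' ?_
  filter_upwards [self_mem_nhdsWithin] with t (ht : (0:ℝ) < t)
  rw [Real.inv_rpow (le_of_lt ht), ← Real.rpow_neg (le_of_lt ht)]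
  congr 1
  ring

lemma small_sigma_aux {f : ℂ → ℝ} {σ : ℝ} {U : ℂ → ℝ} {c : ℂ}
    (hσ0 : 0 < σ) (hσ1 : σ < 1)
    (hU : ContDiffOn ℝ 1 U {z : ℂ | 0 ≤ z.im})
    (hUu : ∀ z : ℂ, 0 < z.im → U z = f z)
    (hhomf : ∀ s : ℝ, 0 < s → ∀ z ∈ S, f (s • z) = s ^ σ * f z)
    (hval : ∀ θ : ℝ, 0 < θ → θ < π →
      f (Complex.exp ((θ:ℂ) * Complex.I)) = (c * Complex.exp (((σ * θ : ℝ) : ℂ) * Complex.I)).re) :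
    c = 0 := by
  set s : Set ℂ := {z : ℂ | 0 ≤ z.im} with hs
  have h0s : (0:ℂ) ∈ s := by simp [hs]
  have hdw : DifferentiableWithinAt ℝ U s 0 := (hU.differentiableOn one_ne_zero) 0 h0s
  set L := fderivWithin ℝ U s 0 with hL
  have hF : HasFDerivWithinAt U L s 0 := hdw.hasFDerivWithinAt
  -- rpow tends to zero
  have hrpow0 : Tendsto (fun t : ℝ => t ^ σ) (𝓝[>] (0:ℝ)) (𝓝 0) := by
    have := (Real.continuousAt_rpow_const 0 σ (Or.inr (le_of_lt hσ0))).tendsto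
    rw [Real.zero_rpow (ne_of_gt hσ0)] at this
    exact this.mono_left nhdsWithin_le_nhds
  -- U 0 = 0
  have hU0 : U 0 = 0 := by
    have hray : Tendsto (fun t : ℝ => t • Complex.I) (𝓝[>] (0:ℝ)) (𝓝[s] 0) := by
      rw [tendsto_nhdsWithin_iff]
      constructor
      · have : Continuous (fun t : ℝ => t • Complex.I) := by continuity
        have h := this.tendsto 0
        simp only [zero_smul] at h
        exact h.mono_left nhdsWithin_le_nhds
      · filter_upwards [self_mem_nhdsWithin] with t (ht : (0:ℝ) < t)
        simp [hs, Complex.smul_im, le_of_lt ht]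
    have h1 : Tendsto (fun t : ℝ => U (t • Complex.I)) (𝓝[>] (0:ℝ)) (𝓝 (U 0)) :=
      hdw.continuousWithinAt.tendsto.comp hray
    have h2 : Tendsto (fun t : ℝ => U (t • Complex.I)) (𝓝[>] (0:ℝ)) (𝓝 0) := by
      have heq : (fun t : ℝ => U (t • Complex.I)) =ᶠ[𝓝[>] (0:ℝ)]
          (fun t : ℝ => t ^ σ * f Complex.I) := by
        filter_upwards [self_mem_nhdsWithin] with t (ht : (0:ℝ) < t)
        rw [hUu _ (by rw [Complex.smul_im]; simpa using ht), hhomf t ht _ I_mem_S]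
      have := hrpow0.mul_const (f Complex.I)
      rw [zero_mul] at this
      exact this.congr' heq.symm
    exact tendsto_nhds_unique h1 h2
  -- key : values along rays vanish
  have hb : ∀ θ : ℝ, 0 < θ → θ < π → f (Complex.exp ((θ:ℂ) * Complex.I)) = 0 := by
    intro θ hθ1 hθ2
    by_contra hbne
    set b := f (Complex.exp ((θ:ℂ) * Complex.I)) with hbdef
    set e := Complex.exp ((θ:ℂ) * Complex.I) with he
    have hsin : 0 < Real.sin θ := Real.sin_pos_of_pos_of_lt_pi hθ1 hθ2
    have heS : e ∈ S := expI_mem_S hθ1 hθ2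
    have hray : Tendsto (fun t : ℝ => t • e) (𝓝[>] (0:ℝ)) (𝓝[s] 0) := by
      rw [tendsto_nhdsWithin_iff]
      constructor
      · have : Continuous (fun t : ℝ => t • e) := by continuity
        have h := this.tendsto 0
        simp only [zero_smul] at h
        exact h.mono_left nhdsWithin_le_nhds
      · filter_upwards [self_mem_nhdsWithin] with t (ht : (0:ℝ) < t)
        have : (t • e).im = t * Real.sin θ := by
          rw [Complex.smul_im, he, Complex.exp_ofReal_mul_I_im, smul_eq_mul]
        simp only [hs, Set.mem_setOf_eq, this]
        positivity
    have hlo := hF.isLittleO.comp_tendsto hray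
    rw [isLittleO_iff] at hlo
    have hbound := hlo (c := 1) one_pos
    simp only [Function.comp, sub_zero, hU0, map_smul] at hbound
    set Le := L e with hLe
    have htop := (tendsto_rpow_sub_one_atTop hσ1).eventually_gt_atTop ((1 + |Le|)/|b|)
    have habs1 : ‖e‖ = 1 := by
      rw [he]; exact Complex.norm_exp_ofReal_mul_I θ
    rcases (hbound.and (htop.and self_mem_nhdsWithin)).exists with ⟨t, h1, h2, (ht : (0:ℝ) < t)⟩
    -- rewrite h1
    have hup : U (t • e) = t ^ σ * b := by
      rw [hUu _ ?_, hhomf t ht _ heS]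
      have : (t • e).im = t * Real.sin θ := by
        rw [Complex.smul_im, he, Complex.exp_ofReal_mul_I_im, smul_eq_mul]
      rw [this]
      positivity
    rw [hup] at h1
    have hnorm : ‖t • e‖ = t := by
      rw [norm_smul]
      simp [habs1, abs_of_pos ht]
    rw [hnorm] at h1
    have hsmul : ‖t ^ σ * b - t • Le‖ = |t ^ σ * b - t * Le| := by
      norm_num
    rw [hsmul] at h1
    -- now derive contradiction
    have hbpos : 0 < |b| := abs_pos.mpr hbne
    have hpow : t ^ σ = t ^ (σ - 1) * t := by
      rw [← Real.rpow_add_one (ne_of_gt ht)]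
      ring_nf
    have h6 : 1 + |Le| < t ^ (σ - 1) * |b| := by
      rw [div_lt_iff₀ hbpos] at h2
      linarith
    have h7 : t < |t ^ σ * b - t * Le| := by
      have h3 := abs_sub_abs_le_abs_sub (t ^ σ * b) (t * Le)
      have h4 : |t ^ σ * b| = t ^ (σ - 1) * |b| * t := by
        rw [abs_mul, hpow, abs_of_pos (by positivity : (0:ℝ) < t ^ (σ-1) * t)]
        ring
      have h5 : |t * Le| = t * |Le| := by rw [abs_mul, abs_of_pos ht]
      nlinarith [h3, mul_lt_mul_of_pos_left h6 ht]
    rw [one_mul] at h1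
    linarith [h1, h7]
  -- conclude c = 0
  apply re_exp_zero (ne_of_gt hσ0) Real.pi_pos
  intro θ hθ1 hθ2
  rw [← hval θ hθ1 hθ2]
  exact hb θ hθ1 hθ2

end HHC

open Filter Asymptotics HHC in
/-- Classification of homogeneous average-free `q`-valued harmonic functions in the plane:
if `u ∈ C^{1;q}(ℝ²)` is average-free, not identically zero, each `u_l` is harmonic off the
slit `[0,∞) × {0}` (with cyclic matching), and `u` is homogeneous of degree `σ > 0`, then
`σ = k/q` for some integer `k ≥ 1` with `q ∤ k`, and
`u_l(r e^{iθ}) = Re(c r^{k/q} e^{i(k/q)(θ + 2lπ)})` (components indexed from `0`) for some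
`c ∈ ℂ`; moreover, since `u ∈ C^{1;q}`, necessarily `σ ≥ 1 + 1/q`. -/
theorem homogeneous_harmonic_classification (q : ℕ) [NeZero q] (hq : 2 ≤ q)
    (u : Fin q → ℂ → ℝ) (σ : ℝ) (hσ : 0 < σ)
    (hreg : IsCkqC q 1 Set.univ u)
    (hsm : ∀ l, ContDiffOn ℝ 2 (u l) {z : ℂ | z ∉ slitPC})
    (hharm : ∀ l, ∀ z ∉ slitPC,
      fderiv ℝ (fun w => fderiv ℝ (u l) w 1) z 1 +
        fderiv ℝ (fun w => fderiv ℝ (u l) w Complex.I) z Complex.I = 0)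
    (hhom : ∀ t : ℝ, 0 < t → ∀ l, ∀ z ∉ slitPC, u l (t • z) = t ^ σ * u l z)
    (havg : ∀ z ∉ slitPC, ∑ l, u l z = 0)
    (hne : ∃ l, ∃ z ∉ slitPC, u l z ≠ 0) :
    ∃ k : ℕ, 1 ≤ k ∧ ¬ (q ∣ k) ∧ σ = (k : ℝ) / (q : ℝ) ∧ 1 + 1 / (q : ℝ) ≤ σ ∧
      ∃ c : ℂ, ∀ r θ : ℝ, 0 < r → 0 < θ → θ < 2 * π → ∀ l : Fin q,
        u l ((r : ℂ) * Complex.exp (((θ : ℝ) : ℂ) * Complex.I)) =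
          (c * ((r ^ ((k : ℝ) / (q : ℝ)) : ℝ) : ℂ) *
            Complex.exp (Complex.I *
              ((((k : ℝ) / (q : ℝ)) * (θ + 2 * ((l : ℕ) : ℝ) * π) : ℝ) : ℂ))).re := by
  have hπ : (0:ℝ) < π := Real.pi_pos
  have hq0 : (0:ℝ) < (q:ℝ) := by positivity
  obtain ⟨hreg1, ⟨v, hv1, hv2, hv3⟩, ⟨U, L0, hU1, hL1, hU3, hL4⟩⟩ := hreg
  -- basic data per sheet
  have hsm' : ∀ l, ContDiffOn ℝ 2 (u l) S := fun l => hsm l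
  have hharm' : ∀ l, ∀ z ∈ S, fderiv ℝ (fun w => fderiv ℝ (u l) w 1) z 1 +
      fderiv ℝ (fun w => fderiv ℝ (u l) w Complex.I) z Complex.I = 0 :=
    fun l z hz => hharm l z hz
  have hhom' : ∀ l, ∀ s : ℝ, 0 < s → ∀ z ∈ S, u l (s • z) = s ^ σ * u l z :=
    fun l s hs z hz => hhom s hs l z hz
  set A : Fin q → ℂ := fun l => coefA (u l) σ with hA
  have hfA : ∀ l, ∀ θ : ℝ, 0 < θ → θ < 2 * π →
      G (u l) (Complex.exp ((θ:ℂ) * Complex.I)) =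
        A l * Complex.exp ((((σ-1) * θ : ℝ) : ℂ) * Complex.I) :=
    fun l θ h1 h2 => psi_eq (hsm' l) (hharm' l) (hhom' l) h1 h2
  set E : ℂ := Complex.exp ((((σ-1) * (2 * π) : ℝ) : ℂ) * Complex.I) with hE
  have hstep : ∀ l : Fin q, A (l + 1) = A l * E := by
    intro l
    exact matching (hv1 l) (fun z hz => hv2 l z trivial hz) (fun z hz => hv3 l z trivial hz)
      (hfA l) (hfA (l+1))
  -- value formula
  have hval : ∀ l, ∀ r θ : ℝ, 0 < r → 0 < θ → θ < 2 * π →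
      u l (r • Complex.exp ((θ:ℂ) * Complex.I)) =
        r ^ σ * (A l / σ * Complex.exp (((σ * θ : ℝ) : ℂ) * Complex.I)).re :=
    fun l r θ hr h1 h2 => f_polar (hsm' l) (hharm' l) (hhom' l) hσ hr h1 h2
  -- chain of coefficients
  have hchain : ∀ n : ℕ, ∀ hn : n < q, A ⟨n, hn⟩ = A 0 * E ^ n := by
    intro n
    induction n with
    | zero =>
      intro hn
      have h0 : (⟨0, hn⟩ : Fin q) = 0 := by
        apply Fin.ext; simp
      rw [h0, pow_zero, mul_one]
    | succ m ih =>
      intro hn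
      have hm : m < q := Nat.lt_of_succ_lt hn
      have hfin : (⟨m, hm⟩ : Fin q) + 1 = ⟨m+1, hn⟩ := by
        apply Fin.ext
        rw [Fin.add_def]
        simp only [Fin.val_one', Fin.val_mk]
        rw [Nat.mod_eq_of_lt (show 1 < q by omega)]
        exact Nat.mod_eq_of_lt hn
      rw [← hfin, hstep ⟨m, hm⟩, ih hm, pow_succ]
      ring
  have hAl : ∀ l : Fin q, A l = A 0 * E ^ (l : ℕ) := by
    intro l
    have := hchain l.val l.isLt
    simpa using this
  -- wraparound
  have hwrap : A 0 = A 0 * E ^ q := by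
    have hlast : ((⟨q-1, by omega⟩ : Fin q) + 1) = 0 := by
      apply Fin.ext
      rw [Fin.add_def]
      simp only [Fin.val_one', Fin.val_mk, Fin.val_zero]
      rw [Nat.mod_eq_of_lt (show 1 < q by omega)]
      have : q - 1 + 1 = q := by omega
      rw [this]
      exact Nat.mod_self q
    calc A 0 = A ((⟨q-1, by omega⟩ : Fin q) + 1) := by rw [hlast]
      _ = A ⟨q-1, by omega⟩ * E := hstep _
      _ = (A 0 * E ^ (q-1)) * E := by rw [hchain (q-1) (by omega)]
      _ = A 0 * E ^ (q - 1 + 1) := by rw [pow_succ]; ring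
      _ = A 0 * E ^ q := by congr 2; omega
  -- A 0 ≠ 0
  have hA0 : A 0 ≠ 0 := by
    intro h0
    obtain ⟨l, z, hz, hnz⟩ := hne
    apply hnz
    obtain ⟨r, θ, hr, h1, h2, hzeq⟩ := polar_rep (show z ∈ S from hz)
    rw [hzeq, hval l r θ hr h1 h2, hAl l, h0]
    simp
  have hEq : E ^ q = 1 := by
    have := hwrap
    nth_rewrite 1 [show A 0 = A 0 * 1 by ring] at this
    exact (mul_left_cancel₀ hA0 this).symm
  -- qσ is an integer
  obtain ⟨m, hm⟩ : ∃ m : ℤ, ((q:ℂ)) * (((((σ-1) * (2*π) : ℝ)) : ℂ) * Complex.I) = m * (2 * π * Complex.I) := by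
    rw [← Complex.exp_eq_one_iff, Complex.exp_nat_mul, hEq]
  have hmre : (q:ℝ) * ((σ-1) * (2*π)) = m * (2*π) := by
    have := congrArg Complex.im hm
    simpa [Complex.mul_im] using this
  have hqσ : (q:ℝ) * σ = (m:ℝ) + q := by
    have h2π : (2*π) ≠ 0 := by positivity
    field_simp at hmre
    nlinarith [hmre, hπ]
  have hmq_pos : 0 < m + (q:ℤ) := by
    have : (0:ℝ) < (m:ℝ) + q := by
      rw [← hqσ]; positivity
    exact_mod_cast this
  set k : ℕ := (m + q).toNat with hkdef
  have hk_int : ((k:ℤ)) = m + q := Int.toNat_of_nonneg hmq_pos.le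
  have hk_real : (k:ℝ) = (q:ℝ) * σ := by
    have h1 : ((k:ℤ) : ℝ) = ((m + (q:ℤ) : ℤ) : ℝ) := by exact_mod_cast hk_int
    push_cast at h1
    rw [hqσ]
    linarith
  have hk1 : 1 ≤ k := by omega
  have hσeq : σ = (k:ℝ)/(q:ℝ) := by
    rw [hk_real]
    field_simp
  have hσne : (σ:ℝ) ≠ 0 := ne_of_gt hσ
  -- the power expansion of E
  have hEl : ∀ n : ℕ, E ^ n = Complex.exp (((σ * (2*π) * n : ℝ) : ℂ) * Complex.I) := by
    intro n
    rw [hE, ← Complex.exp_nat_mul]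
    have hexp : ((σ * (2*π) * n : ℝ) : ℂ) * Complex.I =
        (n:ℂ) * (((((σ-1) * (2 * π) : ℝ)) : ℂ) * Complex.I) + (n:ℤ) * (2*(π:ℂ)*Complex.I) := by
      push_cast
      ring
    rw [hexp, Complex.exp_add, Complex.exp_int_mul_two_pi_mul_I, mul_one]
  -- unit-circle values
  have hval1 : ∀ l, ∀ θ : ℝ, 0 < θ → θ < 2 * π →
      u l (Complex.exp ((θ:ℂ) * Complex.I)) =
        (A l / σ * Complex.exp (((σ * θ : ℝ) : ℂ) * Complex.I)).re := by
    intro l θ h1 h2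
    have := hval l 1 θ one_pos h1 h2
    rw [one_smul, Real.one_rpow, one_mul] at this
    exact this
  -- non-divisibility
  have hndvd : ¬ (q ∣ k) := by
    rintro ⟨j, hj⟩
    have hσj : σ = (j:ℝ) := by
      have : (k:ℝ) = (q:ℝ) * (j:ℝ) := by exact_mod_cast congrArg (fun n : ℕ => (n:ℝ)) hj
      rw [hk_real] at this
      exact mul_left_cancel₀ (ne_of_gt hq0) this
    have hE1 : E = 1 := by
      rw [hE]
      have : ((((σ-1) * (2 * π) : ℝ)) : ℂ) * Complex.I = ((((j:ℤ) - 1 : ℤ)) : ℂ) * (2*(π:ℂ)*Complex.I) := by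
        rw [hσj]
        push_cast
        ring
      rw [this, Complex.exp_int_mul_two_pi_mul_I]
    have hAll : ∀ l : Fin q, A l = A 0 := by
      intro l
      rw [hAl l, hE1, one_pow, mul_one]
    have hw : ∀ θ : ℝ, 0 < θ → θ < 2 * π →
        (A 0 / σ * Complex.exp (((σ * θ : ℝ) : ℂ) * Complex.I)).re = 0 := by
      intro θ h1 h2
      have hzS : Complex.exp ((θ:ℂ) * Complex.I) ∈ S := exp_mem_S h1 h2
      have hsum := havg _ hzS
      have heach : ∀ l : Fin q, u l (Complex.exp ((θ:ℂ) * Complex.I)) =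
          (A 0 / σ * Complex.exp (((σ * θ : ℝ) : ℂ) * Complex.I)).re := by
        intro l
        rw [hval1 l θ h1 h2, hAll l]
      rw [Finset.sum_congr rfl (fun l _ => heach l)] at hsum
      rw [Finset.sum_const, Finset.card_univ, Fintype.card_fin, nsmul_eq_mul] at hsum
      have hqne : ((q:ℝ)) ≠ 0 := ne_of_gt hq0
      exact (mul_eq_zero.mp hsum).resolve_left hqne
    have := re_exp_zero hσne (by positivity : (0:ℝ) < 2*π) (fun θ h1 h2 => hw θ h1 h2)
    rw [div_eq_zero_iff] at this
    rcases this with h | h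
    · exact hA0 h
    · exact absurd h (by exact_mod_cast hσne)
  -- exclude σ < 1
  have hkq : q < k := by
    rcases lt_trichotomy k q with hlt | heq | hgt
    · exfalso
      have hσ1 : σ < 1 := by
        rw [hσeq]
        rw [div_lt_one hq0]
        exact_mod_cast hlt
      have hU0' : ContDiffOn ℝ 1 (U 0) {z : ℂ | 0 ≤ z.im} := by
        have := hU1 0
        rwa [Set.univ_inter] at this
      have := small_sigma_aux (c := A 0 / σ) hσ hσ1 hU0'
        (fun z hz => hU3 0 z trivial hz) (hhom' 0)
        (fun θ h1 h2 => hval1 0 θ h1 (by linarith))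
      rw [div_eq_zero_iff] at this
      rcases this with h | h
      · exact hA0 h
      · exact absurd h (by exact_mod_cast hσne)
    · exact absurd (heq ▸ dvd_refl q) hndvd
    · exact hgt
  have hσge : 1 + 1/(q:ℝ) ≤ σ := by
    have hk' : (q:ℝ) + 1 ≤ (k:ℝ) := by exact_mod_cast hkq
    rw [hσeq, le_div_iff₀ hq0]
    have hid : (1 + 1/(q:ℝ)) * q = q + 1 := by field_simp
    rw [hid]
    exact hk'
  refine ⟨k, hk1, hndvd, hσeq, hσge, A 0 / σ, ?_⟩
  intro r θ hr h1 h2 l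
  have hrw : ((r:ℝ) : ℂ) * Complex.exp ((θ:ℂ) * Complex.I) =
      r • Complex.exp ((θ:ℂ) * Complex.I) := (Complex.real_smul).symm
  rw [hrw, hval l r θ hr h1 h2]
  rw [show ((k:ℝ))/(q:ℝ) = σ from hσeq.symm]
  have hc : (A 0 / (σ:ℂ)) * ((r ^ σ : ℝ) : ℂ) *
      Complex.exp (Complex.I * ((σ * (θ + 2 * ((l:ℕ):ℝ) * π) : ℝ) : ℂ))
      = ((r ^ σ : ℝ) : ℂ) * (A l / σ * Complex.exp (((σ * θ : ℝ) : ℂ) * Complex.I)) := by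
    rw [hAl l, hEl (l:ℕ)]
    rw [show Complex.I * ((σ * (θ + 2 * ((l:ℕ):ℝ) * π) : ℝ) : ℂ) =
      ((σ * θ : ℝ) : ℂ) * Complex.I + ((σ * (2*π) * ((l:ℕ):ℝ) : ℝ) : ℂ) * Complex.I by
        push_cast; ring]
    rw [Complex.exp_add]
    ring
  rw [hc, Complex.re_ofReal_mul]
end
end

section
/- (Majorant power estimate) Let H_0 ≥ 1, H ≥ 1, p ≥ 2 be an integer, n ≥ 1, and define the polynomial v(ξ) = H_0 ξ + (1/2)H_0 ξ² + Σ_{s=3}^p (1/(s(s-1))) H_0 H^{s-3} ξ^s. Then there is an absolute constant c = 4π²/3 such that for every k with 1 ≤ k ≤ p, the coefficients of the formal power series (ξ + (1+n)v(ξ))^k satisfy: the coefficient of ξ^s is at most c^{k-1}(1+(1+n)H_0)^k times (1 if s = k or s = k+1, and H^{s-k-2}/(s-k)^2 if k+2 ≤ s ≤ p). -/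
open Polynomial

open Finset

/-- The majorant polynomial `v(ξ) = H₀ ξ + (1/2) H₀ ξ² + ∑_{s=3}^p H₀ H^{s-3} ξ^s / (s(s-1))`. -/
noncomputable def majorantV (p : ℕ) (H0 H : ℝ) : Polynomial ℝ :=
  Polynomial.C H0 * Polynomial.X + Polynomial.C (H0 / 2) * Polynomial.X ^ 2 +
    ∑ s ∈ Finset.Icc 3 p,
      Polynomial.C (H0 * H ^ (s - 3) / ((s : ℝ) * ((s : ℝ) - 1))) * Polynomial.X ^ s

noncomputable def gfun (H : ℝ) (m : ℕ) : ℝ := if m ≤ 1 then 1 else H ^ (m - 2) / (m : ℝ) ^ 2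

lemma gfun_nonneg {H : ℝ} (hH : 0 ≤ H) (m : ℕ) : 0 ≤ gfun H m := by
  unfold gfun; split <;> positivity

lemma gfun_le {H : ℝ} (hH : 1 ≤ H) {j : ℕ} (hj : 1 ≤ j) :
    gfun H j ≤ H ^ (j - 1) / (j : ℝ) ^ 2 := by
  have h0 : (0:ℝ) ≤ H := by linarith
  unfold gfun
  split_ifs with h
  · interval_cases j
    · simp
  · have h2 : 2 ≤ j := by omega
    have hp : H ^ (j-2) ≤ H ^ (j-1) := pow_le_pow_right₀ hH (by omega)
    have hj0 : (0:ℝ) < (j:ℝ)^2 := by positivity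
    gcongr

lemma sum_inv_sq_le (n : ℕ) : ∑ a ∈ Finset.range n, (1:ℝ)/((a:ℝ)+1)^2 ≤ 2 := by
  have h : ∀ n : ℕ, ∑ a ∈ Finset.range (n+1), (1:ℝ)/((a:ℝ)+1)^2 ≤ 2 - 1/((n:ℝ)+1) := by
    intro n
    induction n with
    | zero => norm_num
    | succ m ih =>
      rw [Finset.sum_range_succ]
      have hm : (0:ℝ) < (m:ℝ)+1 := by positivity
      have hkey : (1:ℝ)/(((m:ℕ):ℝ)+1+1)^2 ≤ 1/((m:ℝ)+1) - 1/((m:ℝ)+1+1) := by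
        rw [div_sub_div _ _ (ne_of_gt hm) (by positivity)]
        rw [div_le_div_iff₀ (by positivity) (by positivity)]
        ring_nf
        nlinarith
      push_cast
      push_cast at ih hkey
      linarith
  cases n with
  | zero => simp
  | succ m =>
    have hm : (0:ℝ) < 1/((m:ℝ)+1) := by positivity
    linarith [h m]
lemma gfun_conv {H : ℝ} (hH : 1 ≤ H) (M : ℕ) :
    ∑ a ∈ Finset.range (M+1), gfun H a * gfun H (M - a) ≤ (4 * Real.pi ^ 2 / 3) * gfun H M := by
  have hpi : (3:ℝ) < Real.pi := Real.pi_gt_three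
  have hH0 : (0:ℝ) ≤ H := by linarith
  have hc : (12:ℝ) ≤ 4 * Real.pi^2 / 3 := by nlinarith
  match M with
  | 0 => simp [gfun]; nlinarith
  | 1 =>
    simp [Finset.sum_range_succ, gfun]
    nlinarith
  | 2 =>
    rw [show (2:ℕ)+1 = 3 from rfl, Finset.sum_range_succ, Finset.sum_range_succ,
      Finset.sum_range_succ, Finset.sum_range_zero]
    norm_num [gfun]
    nlinarith
  | (M+3) =>
    have hN2 : (0:ℝ) < ((M:ℝ)+3)^2 := by positivity
    rw [Finset.sum_range_succ, Finset.sum_range_succ']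
    have ht0 : gfun H 0 * gfun H ((M+2+1) - 0) = H^(M+1) / ((M:ℝ)+3)^2 := by
      simp only [gfun, Nat.sub_zero, show ¬ (M+2+1 ≤ 1) by omega, if_false,
        show (0:ℕ) ≤ 1 by omega, if_true, show M+2+1-2 = M+1 by omega, one_mul]
      push_cast; ring_nf
    have htN : gfun H (M+2+1) * gfun H ((M+2+1) - (M+2+1)) = H^(M+1) / ((M:ℝ)+3)^2 := by
      simp only [gfun, Nat.sub_self, show ¬ (M+2+1 ≤ 1) by omega, if_false,
        show (0:ℕ) ≤ 1 by omega, if_true, show M+2+1-2 = M+1 by omega, mul_one]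
      push_cast; ring_nf
    have hgM : gfun H (M+2+1) = H^(M+1) / ((M:ℝ)+3)^2 := by
      simp only [gfun, show ¬ (M+2+1 ≤ 1) by omega, if_false, show M+2+1-2 = M+1 by omega]
      push_cast; ring_nf
    have hmid : ∑ a ∈ Finset.range (M+2), gfun H (a+1) * gfun H (M+3 - (a+1)) ≤
        8 * (H^(M+1) / ((M:ℝ)+3)^2) := by
      have hterm : ∀ a ∈ Finset.range (M+2),
          gfun H (a+1) * gfun H (M+3 - (a+1)) ≤
          H^(M+1) * (2/((M:ℝ)+3)^2) * (1/((a:ℝ)+1)^2 + 1/((M:ℝ)+2-(a:ℝ))^2) := by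
        intro a ha
        rw [Finset.mem_range] at ha
        have haM : a ≤ M+1 := by omega
        have hsub : M+3 - (a+1) = M+2-a := by omega
        have hsub2 : ((M+2-a : ℕ):ℝ) = (M:ℝ)+2-(a:ℝ) := by
          rw [Nat.cast_sub (by omega)]; push_cast; ring
        have hx : (0:ℝ) < (a:ℝ)+1 := by positivity
        have hy : (0:ℝ) < (M:ℝ)+2-(a:ℝ) := by
          have : (a:ℝ) ≤ (M:ℝ)+1 := by exact_mod_cast haM
          linarith
        have h1 : gfun H (a+1) ≤ H^a / ((a:ℝ)+1)^2 := by
          have := gfun_le hH (show 1 ≤ a+1 by omega)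
          simpa using this
        have h2 : gfun H (M+2-a) ≤ H^(M+1-a) / ((M:ℝ)+2-(a:ℝ))^2 := by
          have := gfun_le hH (show 1 ≤ M+2-a by omega)
          rw [show M+2-a-1 = M+1-a by omega, hsub2] at this
          exact this
        have hpow : H^a * H^(M+1-a) = H^(M+1) := by
          rw [← pow_add]; congr 1; omega
        have hprod : gfun H (a+1) * gfun H (M+2-a) ≤
            H^(M+1) / (((a:ℝ)+1)^2 * ((M:ℝ)+2-(a:ℝ))^2) := by
          calc gfun H (a+1) * gfun H (M+2-a)
              ≤ (H^a / ((a:ℝ)+1)^2) * (H^(M+1-a) / ((M:ℝ)+2-(a:ℝ))^2) :=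
                mul_le_mul h1 h2 (gfun_nonneg hH0 _) (by positivity)
            _ = (H^a * H^(M+1-a)) / (((a:ℝ)+1)^2 * ((M:ℝ)+2-(a:ℝ))^2) := by
                rw [div_mul_div_comm]
            _ = H^(M+1) / (((a:ℝ)+1)^2 * ((M:ℝ)+2-(a:ℝ))^2) := by rw [hpow]
        rw [hsub]
        refine hprod.trans ?_
        rw [div_le_iff₀ (by positivity)]
        have hHM : (0:ℝ) ≤ H^(M+1) := by positivity
        have hsq : ((M:ℝ)+3)^2 ≤ 2*(((a:ℝ)+1)^2 + ((M:ℝ)+2-(a:ℝ))^2) := by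
          nlinarith [sq_nonneg ((a:ℝ)+1 - ((M:ℝ)+2-(a:ℝ)))]
        have expand : H^(M+1) * (2/((M:ℝ)+3)^2) * (1/((a:ℝ)+1)^2 + 1/((M:ℝ)+2-(a:ℝ))^2) *
            (((a:ℝ)+1)^2 * ((M:ℝ)+2-(a:ℝ))^2) =
            H^(M+1) * (2*(((a:ℝ)+1)^2 + ((M:ℝ)+2-(a:ℝ))^2)) / ((M:ℝ)+3)^2 := by
          field_simp
          ring
        rw [expand, le_div_iff₀ (by positivity)]
        nlinarith [mul_le_mul_of_nonneg_left hsq hHM]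
      refine (Finset.sum_le_sum hterm).trans ?_
      rw [← Finset.mul_sum, Finset.sum_add_distrib]
      have hrefl : ∑ a ∈ Finset.range (M+2), 1/((M:ℝ)+2-(a:ℝ))^2 =
          ∑ a ∈ Finset.range (M+2), 1/((a:ℝ)+1)^2 := by
        rw [← Finset.sum_range_reflect (fun j => 1/((j:ℝ)+1)^2) (M+2)]
        apply Finset.sum_congr rfl
        intro a ha
        rw [Finset.mem_range] at ha
        have hcast : ((M+2-1-a : ℕ):ℝ) = (M:ℝ)+1-(a:ℝ) := by
          rw [Nat.cast_sub (by omega)]; push_cast; ring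
        rw [hcast]; ring_nf
      rw [hrefl]
      have hS := sum_inv_sq_le (M+2)
      have hHM : (0:ℝ) ≤ H^(M+1) := by positivity
      calc H^(M+1) * (2/((M:ℝ)+3)^2) * (∑ a ∈ Finset.range (M+2), 1/((a:ℝ)+1)^2 +
            ∑ a ∈ Finset.range (M+2), 1/((a:ℝ)+1)^2)
          ≤ H^(M+1) * (2/((M:ℝ)+3)^2) * (2 + 2) :=
            mul_le_mul_of_nonneg_left (by linarith) (by positivity)
        _ = 8 * (H^(M+1) / ((M:ℝ)+3)^2) := by ring
    rw [htN, ht0, hgM]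
    have hHM : (0:ℝ) ≤ H^(M+1) := by positivity
    have hfin : (10:ℝ) * (H^(M+1) / ((M:ℝ)+3)^2) ≤ (4*Real.pi^2/3) * (H^(M+1) / ((M:ℝ)+3)^2) :=
      mul_le_mul_of_nonneg_right (by linarith) (by positivity)
    linarith [hmid]
lemma ite_eq_gfun (H : ℝ) {k s : ℕ} (hks : k ≤ s) :
    (if s ≤ k + 1 then (1:ℝ) else H ^ (s - k - 2) / (((s:ℝ) - (k:ℝ)) ^ 2)) = gfun H (s - k) := by
  rcases le_or_gt s (k+1) with h | h
  · rw [if_pos h]; unfold gfun; rw [if_pos (by omega)]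
  · rw [if_neg (by omega)]; unfold gfun
    rw [if_neg (by omega), Nat.cast_sub hks]

/-- Majorant power estimate: with `c = 4π²/3`, for every `1 ≤ k ≤ p`, the coefficient of
`ξ^s` (for `k ≤ s ≤ p`) in `(ξ + (1+n)v(ξ))^k` is at most
`c^{k-1} (1+(1+n)H₀)^k` times (`1` if `s = k` or `s = k+1`, and `H^{s-k-2}/(s-k)²`
if `k+2 ≤ s ≤ p`). -/
theorem majorant_power_estimate (n p : ℕ) (H0 H : ℝ) (hH0 : 1 ≤ H0) (hH : 1 ≤ H)
    (hp : 2 ≤ p) (hn : 1 ≤ n) :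
    ∀ k : ℕ, 1 ≤ k → k ≤ p → ∀ s : ℕ, k ≤ s → s ≤ p →
      ((Polynomial.X + Polynomial.C (1 + (n : ℝ)) * majorantV p H0 H) ^ k).coeff s ≤
        (4 * Real.pi ^ 2 / 3) ^ (k - 1) * (1 + (1 + (n : ℝ)) * H0) ^ k *
          (if s ≤ k + 1 then 1 else H ^ (s - k - 2) / (((s : ℝ) - (k : ℝ)) ^ 2)) := by
  set c : ℝ := 4 * Real.pi ^ 2 / 3 with hcdef
  set P : Polynomial ℝ := Polynomial.X + Polynomial.C (1 + (n:ℝ)) * majorantV p H0 H with hPdef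
  set A : ℝ := 1 + (1 + (n:ℝ)) * H0 with hAdef
  have hn1 : (1:ℝ) ≤ (n:ℝ) := by exact_mod_cast hn
  have hH0n : (0:ℝ) ≤ H0 := by linarith
  have hA1 : (1:ℝ) ≤ A := by nlinarith
  have hA0 : (0:ℝ) ≤ A := by linarith
  have hH' : (0:ℝ) ≤ H := by linarith
  have hc0 : (0:ℝ) ≤ c := by rw [hcdef]; positivity
  -- coefficients of P
  have hPc : ∀ i : ℕ, P.coeff i = (if 1 = i then 1 else 0) +
      (1+(n:ℝ)) * ((if i = 1 then H0 else 0) + (if i = 2 then H0/2 else 0) +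
      (if i ∈ Finset.Icc 3 p then H0 * H ^ (i-3) / ((i:ℝ) * ((i:ℝ) - 1)) else 0)) := by
    intro i
    rw [hPdef]
    simp only [majorantV, Polynomial.coeff_add, Polynomial.coeff_C_mul, Polynomial.coeff_X,
      Polynomial.coeff_X_pow, Polynomial.finset_sum_coeff, mul_ite, mul_one, mul_zero,
      Finset.sum_ite_eq, Finset.sum_ite_eq']
    congr 2 <;> split_ifs <;> first | rfl | omega
  have hP0 : P.coeff 0 = 0 := by
    rw [hPc]
    norm_num
  have hvterm_nonneg : ∀ i : ℕ, i ∈ Finset.Icc 3 p → (0:ℝ) ≤ H0 * H^(i-3)/((i:ℝ)*((i:ℝ)-1)) := by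
    intro i hi
    rw [Finset.mem_Icc] at hi
    have h3 : (3:ℝ) ≤ (i:ℝ) := by exact_mod_cast hi.1
    have hpos : (0:ℝ) < (i:ℝ)*((i:ℝ)-1) := by nlinarith
    positivity
  have hPnn : ∀ i, (0:ℝ) ≤ P.coeff i := by
    intro i
    rw [hPc]
    have h1 : (0:ℝ) ≤ if 1 = i then (1:ℝ) else 0 := by split <;> norm_num
    have h2 : (0:ℝ) ≤ if i = 1 then H0 else 0 := by split <;> linarith
    have h3 : (0:ℝ) ≤ if i = 2 then H0/2 else 0 := by split <;> linarith
    have h4 : (0:ℝ) ≤ if i ∈ Finset.Icc 3 p then H0*H^(i-3)/((i:ℝ)*((i:ℝ)-1)) else 0 := by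
      split_ifs with h
      · exact hvterm_nonneg i h
      · exact le_refl 0
    have h5 : (0:ℝ) ≤ 1+(n:ℝ) := by linarith
    have := mul_nonneg h5 (add_nonneg (add_nonneg h2 h3) h4)
    linarith
  have hPb : ∀ i : ℕ, 1 ≤ i → P.coeff i ≤ A * gfun H (i-1) := by
    intro i hi
    rw [hPc]
    match i, hi with
    | 1, _ =>
      norm_num [Finset.mem_Icc, gfun]
      rw [hAdef]
    | 2, _ =>
      have h2m : (2:ℕ) ∉ Finset.Icc 3 p := by simp
      norm_num [h2m, gfun]
      rw [hAdef]
      nlinarith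
    | (i+3), _ =>
      have hne1 : ¬ (1 = i+3) := by omega
      have hne2 : ¬ (i+3 = 1) := by omega
      have hne3 : ¬ (i+3 = 2) := by omega
      rw [if_neg hne1, if_neg hne2, if_neg hne3]
      have hg : gfun H (i+3-1) = H^(i+3-3)/(((i:ℝ)+2))^2 := by
        unfold gfun
        rw [if_neg (by omega)]
        norm_num
      rw [hg]
      by_cases hmem : (i+3) ∈ Finset.Icc 3 p
      · rw [if_pos hmem]
        have h3 : (3:ℝ) ≤ ((i+3:ℕ):ℝ) := by exact_mod_cast (Finset.mem_Icc.mp hmem).1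
        have hx : ((i+3:ℕ):ℝ) = (i:ℝ)+3 := by push_cast; ring
        rw [hx]
        have e1 : (1+(n:ℝ))*H0 ≤ A := by rw [hAdef]; linarith
        have hdiv : H^(i+3-3)/(((i:ℝ)+3)*(((i:ℝ)+3)-1)) ≤ H^(i+3-3)/((i:ℝ)+2)^2 :=
          div_le_div_of_nonneg_left (pow_nonneg hH' _) (by positivity) (by nlinarith)
        calc 0 + (1+(n:ℝ)) * (0 + 0 + H0 * H^(i+3-3)/(((i:ℝ)+3)*(((i:ℝ)+3)-1)))
            = ((1+(n:ℝ))*H0) * (H^(i+3-3)/(((i:ℝ)+3)*(((i:ℝ)+3)-1))) := by ring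
          _ ≤ A * (H^(i+3-3)/((i:ℝ)+2)^2) :=
              mul_le_mul e1 hdiv (div_nonneg (pow_nonneg hH' _)
                (by nlinarith [Nat.cast_nonneg (α := ℝ) i])) hA0
      · rw [if_neg hmem]
        have h0' : (0:ℝ) ≤ A * (H^(i+3-3)/((i:ℝ)+2)^2) :=
          mul_nonneg hA0 (div_nonneg (pow_nonneg hH' _) (by positivity))
        linarith
  have hpow0 : ∀ (k j : ℕ), j < k → (P^k).coeff j = 0 := by
    have hXdvd : Polynomial.X ∣ P := Polynomial.X_dvd_iff.mpr hP0
    intro k j hj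
    obtain ⟨Q, hQ⟩ := pow_dvd_pow_of_dvd hXdvd k
    rw [hQ, mul_comm, Polynomial.coeff_mul_X_pow', if_neg (by omega)]
  have hpownn : ∀ (k j : ℕ), (0:ℝ) ≤ (P^k).coeff j := by
    intro k
    induction k with
    | zero => intro j; rw [pow_zero, Polynomial.coeff_one]; split <;> norm_num
    | succ m ihm =>
      intro j
      rw [pow_succ, Polynomial.coeff_mul]
      exact Finset.sum_nonneg fun x _ => mul_nonneg (ihm x.1) (hPnn x.2)
  intro k hk1
  induction k, hk1 using Nat.le_induction with
  | base =>
    intro _ s hs1 hsp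
    rw [ite_eq_gfun H hs1]
    simp only [pow_one, Nat.sub_self, pow_zero, one_mul]
    exact hPb s hs1
  | succ k hk ih =>
    intro hk1p s hs1 hsp
    have hkp : k ≤ p := by omega
    have hm1 : 1 ≤ s - k := by omega
    rw [ite_eq_gfun H (by omega : k + 1 ≤ s)]
    rw [pow_succ, Polynomial.coeff_mul, Finset.Nat.sum_antidiagonal_eq_sum_range_succ_mk]
    have hsub : Finset.Icc k (s-1) ⊆ Finset.range (s+1) := by
      intro x hx; rw [Finset.mem_Icc] at hx; rw [Finset.mem_range]; omega
    have hzero : ∀ i ∈ Finset.range (s+1), i ∉ Finset.Icc k (s-1) →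
        (P^k).coeff i * P.coeff (s-i) = 0 := by
      intro i hi hnot
      rw [Finset.mem_range] at hi; rw [Finset.mem_Icc] at hnot; push_neg at hnot
      rcases lt_or_ge i k with h | h
      · rw [hpow0 k i h, zero_mul]
      · have : i = s := by omega
        subst this; rw [Nat.sub_self, hP0, mul_zero]
    rw [← Finset.sum_subset hsub hzero]
    rw [show Finset.Icc k (s-1) = Finset.Ico k s by
      rw [← Finset.Ico_add_one_right_eq_Icc]; congr 1; omega]
    rw [Finset.sum_Ico_eq_sum_range]
    have hbound : ∀ a ∈ Finset.range (s-k), (P^k).coeff (k+a) * P.coeff (s-(k+a)) ≤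
        (c^(k-1) * A^k * gfun H a) * (A * gfun H ((s-k-1) - a)) := by
      intro a ha; rw [Finset.mem_range] at ha
      have h1 : (P^k).coeff (k+a) ≤ c^(k-1) * A^k * gfun H a := by
        have h := ih hkp (k+a) (by omega) (by omega)
        rw [ite_eq_gfun H (by omega : k ≤ k+a), show k+a-k = a by omega] at h
        exact h
      have h2 : P.coeff (s-(k+a)) ≤ A * gfun H ((s-k-1)-a) := by
        have h := hPb (s-(k+a)) (by omega)
        rw [show s-(k+a)-1 = (s-k-1)-a by omega] at h
        exact h
      exact mul_le_mul h1 h2 (hPnn _)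
        (mul_nonneg (mul_nonneg (pow_nonneg hc0 _) (pow_nonneg hA0 _)) (gfun_nonneg hH' a))
    calc ∑ a ∈ Finset.range (s-k), (P^k).coeff (k+a) * P.coeff (s-(k+a))
        ≤ ∑ a ∈ Finset.range (s-k), (c^(k-1) * A^k * gfun H a) * (A * gfun H ((s-k-1) - a)) :=
          Finset.sum_le_sum hbound
      _ = (c^(k-1) * A^(k+1)) * ∑ a ∈ Finset.range (s-k), gfun H a * gfun H ((s-k-1) - a) := by
          rw [Finset.mul_sum]
          apply Finset.sum_congr rfl
          intro a _
          ring
      _ ≤ (c^(k-1) * A^(k+1)) * (c * gfun H (s-k-1)) := by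
          apply mul_le_mul_of_nonneg_left ?_ (mul_nonneg (pow_nonneg hc0 _) (pow_nonneg hA0 _))
          have h := gfun_conv hH (s-k-1)
          rw [show (s-k-1)+1 = s-k by omega, ← hcdef] at h
          exact h
      _ = c^((k+1)-1) * A^(k+1) * gfun H (s-(k+1)) := by
          rw [show s-(k+1) = s-k-1 by omega, show (k+1)-1 = k by omega]
          have hck : c^(k-1) * c = c^k := by
            rw [← pow_succ]; congr 1; omega
          rw [← hck]; ring
end

section
/- (Vanishing Taylor coefficients from symmetry) Let w : cl(B²_1(0)) → R be C^{2q} and suppose that (i) Σ_{l=0}^{q-1} w(re^{i(θ+2πl/q)}) = 0 for all r ∈ [0,1], θ; (ii) w(re^{i(θ+2π/k)}) = w(re^{iθ}) for all r, θ, where k > q and gcd(k,q) = 1; and (iii) the degree 2q−1 Taylor polynomial of w at 0 is harmonic, hence of the form Re(Σ_{j=0}^{2q-1} c_j (ξ_1+iξ_2)^j) with c_j ∈ C. Then c_j = 0 for j = 0,1,...,q. Consequently |w(ξ)| ≤ sup_{B₁} |D^{q+1}w| · |ξ|^{q+1} for ξ ∈ B²_1(0). -/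
open Complex Asymptotics
open scoped Real BigOperators Topology

open Set

lemma const_of_isLittleO {a : ℝ} (h : (fun _ : ℝ => a) =o[𝓝[>] (0:ℝ)] (fun _ => (1:ℝ))) :
    a = 0 := by
  rw [isLittleO_const_iff one_ne_zero] at h
  exact tendsto_nhds_unique tendsto_const_nhds h

/-- A real polynomial that is `o(r^n)` as `r → 0⁺` has all coefficients up to `n` zero. -/
lemma poly_coeff_vanish : ∀ (n : ℕ) (a : ℕ → ℝ),
    (fun r : ℝ => ∑ j ∈ Finset.range (n + 1), a j * r ^ j) =o[𝓝[>] (0:ℝ)] (fun r => r ^ n) →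
    ∀ j ≤ n, a j = 0 := by
  intro n
  induction n with
  | zero =>
    intro a h j hj
    interval_cases j
    exact const_of_isLittleO (by simpa using h)
  | succ n ih =>
    intro a h j hj
    have hcont : Continuous (fun r : ℝ => ∑ j ∈ Finset.range (n + 2), a j * r ^ j) :=
      continuous_finset_sum _ fun j _ => continuous_const.mul (continuous_pow j)
    have ha0 : a 0 = 0 := by
      have h1 : Filter.Tendsto (fun r : ℝ => ∑ j ∈ Finset.range (n + 2), a j * r ^ j)
          (𝓝[>] (0:ℝ)) (𝓝 0) := by
        refine h.isBigO.trans_tendsto ?_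
        have : Filter.Tendsto (fun r : ℝ => r ^ (n+1)) (𝓝 (0:ℝ)) (𝓝 ((0:ℝ)^(n+1))) :=
          (continuous_pow (n+1)).tendsto 0
        simpa using this.mono_left nhdsWithin_le_nhds
      have h2 : Filter.Tendsto (fun r : ℝ => ∑ j ∈ Finset.range (n + 2), a j * r ^ j)
          (𝓝[>] (0:ℝ)) (𝓝 (a 0)) := by
        have := (hcont.tendsto 0).mono_left (nhdsWithin_le_nhds (s := Set.Ioi (0:ℝ)))
        have hval : ∑ j ∈ Finset.range (n + 2), a j * (0:ℝ) ^ j = a 0 := by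
          rw [Finset.sum_eq_single 0]
          · simp
          · intro b _ hb
            simp [zero_pow hb]
          · simp
        rwa [hval] at this
      exact (tendsto_nhds_unique h1 h2).symm
    -- now divide by r
    have hdiv : (fun r : ℝ => ∑ j ∈ Finset.range (n + 1), a (j+1) * r ^ j)
        =o[𝓝[>] (0:ℝ)] (fun r => r ^ n) := by
      rw [isLittleO_iff] at h ⊢
      intro ε hε
      filter_upwards [h hε, self_mem_nhdsWithin] with r hr hr'
      have hrpos : (0:ℝ) < r := hr'
      have hfac : ∑ j ∈ Finset.range (n + 2), a j * r ^ j
          = r * ∑ j ∈ Finset.range (n + 1), a (j+1) * r ^ j := by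
        rw [Finset.sum_range_succ', ha0, Finset.mul_sum]
        simp only [pow_zero, mul_one, zero_mul, add_zero]
        exact Finset.sum_congr rfl fun i _ => by ring
      rw [hfac] at hr
      rw [show r ^ (n+1) = r * r ^ n by ring] at hr
      simp only [norm_mul, Real.norm_eq_abs] at hr ⊢
      rw [abs_of_pos hrpos] at hr
      calc |∑ j ∈ Finset.range (n + 1), a (j+1) * r ^ j|
          ≤ ε * |r ^ n| := by
            have := hr
            rw [mul_comm ε _, mul_assoc] at this
            exact le_of_mul_le_mul_left (by linarith [this]) hrpos
        _ = ε * ‖r ^ n‖ := by rw [Real.norm_eq_abs]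
    rcases Nat.eq_zero_or_pos j with rfl | hjpos
    · exact ha0
    · obtain ⟨i, rfl⟩ : ∃ i, j = i + 1 := ⟨j - 1, by omega⟩
      exact ih _ hdiv i (by omega)


lemma re_poly_eval (c : ℕ → ℂ) (m : ℕ) (v : ℂ) (r : ℝ) :
    (∑ j ∈ Finset.range m, c j * ((r:ℂ) * v) ^ j).re
      = ∑ j ∈ Finset.range m, (c j * v ^ j).re * r ^ j := by
  rw [Complex.re_sum]
  refine Finset.sum_congr rfl fun j _ => ?_
  have hh : c j * ((r:ℂ) * v) ^ j = ((r ^ j : ℝ) : ℂ) * (c j * v ^ j) := by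
    push_cast; ring
  rw [hh, Complex.re_ofReal_mul]
  ring

lemma coeff_zero_of_re_rotation (j : ℕ) (hj : 1 ≤ j) (A : ℂ)
    (h : ∀ θ : ℝ, (A * Complex.exp ((θ:ℂ) * Complex.I) ^ j).re = 0) : A = 0 := by
  have h0 : A.re = 0 := by simpa using h 0
  have hexp : Complex.exp (((π / (2 * j) : ℝ) : ℂ) * Complex.I) ^ j = Complex.I := by
    rw [← Complex.exp_nat_mul]
    have hcast : (j:ℂ) * (((π / (2 * j) : ℝ) : ℂ) * Complex.I)
        = ((π/2 : ℝ) : ℂ) * Complex.I := by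
      have hj0 : (j:ℂ) ≠ 0 := Nat.cast_ne_zero.2 (by omega)
      push_cast
      field_simp
    rw [hcast, Complex.exp_mul_I, ← Complex.ofReal_cos, ← Complex.ofReal_sin,
      Real.cos_pi_div_two, Real.sin_pi_div_two]
    simp
  have h1 : (A * Complex.I).re = 0 := by
    have := h (π / (2 * j))
    rwa [hexp] at this
  rw [Complex.mul_I_re] at h1
  have h2 : A.im = 0 := by linarith
  exact Complex.ext (by simpa using h0) (by simpa using h2)


/-- Vanishing Taylor coefficients from symmetry: if `w : cl(B²₁(0)) → ℝ` is `C^{2q}`,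
(i) `∑_{l=0}^{q-1} w(re^{i(θ+2πl/q)}) = 0`, (ii) `w(re^{i(θ+2π/k)}) = w(re^{iθ})` with
`k > q`, `gcd(k,q) = 1`, and (iii) the degree `2q-1` Taylor polynomial of `w` at `0`
is harmonic, of the form `Re(∑_{j<2q} c_j z^j)` (normalized so that `c₀` is real), then
`c_j = 0` for `j = 0,…,q`; consequently `|w(ξ)| ≤ sup_{B₁} |D^{q+1} w| · |ξ|^{q+1}`. -/
theorem taylor_coefficients_vanish (q k : ℕ) (hq : 1 ≤ q) (hk : q < k)
    (hcop : Nat.Coprime k q) (w : ℂ → ℝ)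
    (hw : ContDiffOn ℝ (2 * q) w (Metric.closedBall 0 1))
    (hi : ∀ r θ : ℝ, 0 ≤ r → r ≤ 1 →
      ∑ l ∈ Finset.range q,
        w ((r : ℂ) * Complex.exp (((θ + 2 * π * (l : ℝ) / (q : ℝ) : ℝ) : ℂ) * Complex.I)) = 0)
    (hii : ∀ r θ : ℝ, 0 ≤ r → r ≤ 1 →
      w ((r : ℂ) * Complex.exp (((θ + 2 * π / (k : ℝ) : ℝ) : ℂ) * Complex.I)) =
        w ((r : ℂ) * Complex.exp (((θ : ℝ) : ℂ) * Complex.I)))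
    (c : ℕ → ℂ) (hc0 : (c 0).im = 0)
    (hTaylor :
      (fun z : ℂ => w z - (∑ j ∈ Finset.range (2 * q), c j * z ^ j).re)
        =o[𝓝 0] fun z : ℂ => ‖z‖ ^ (2 * q - 1)) :
    (∀ j ≤ q, c j = 0) ∧
    ∀ M : ℝ,
      (∀ x ∈ Metric.closedBall (0 : ℂ) 1,
        ‖iteratedFDerivWithin ℝ (q + 1) w (Metric.closedBall 0 1) x‖ ≤ M) →
      ∀ ξ ∈ Metric.ball (0 : ℂ) 1, |w ξ| ≤ M * ‖ξ‖ ^ (q + 1) := by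
  -- little-o along each ray
  have hdir : ∀ α : ℝ,
      (fun r : ℝ => w ((r:ℂ) * Complex.exp ((α:ℂ) * Complex.I)) -
        ∑ j ∈ Finset.range (2*q),
          (c j * Complex.exp ((α:ℂ) * Complex.I) ^ j).re * r ^ j)
        =o[𝓝[>] (0:ℝ)] fun r : ℝ => r ^ (2*q - 1) := by
    intro α
    set e : ℂ := Complex.exp ((α:ℂ) * Complex.I) with he
    have htend : Filter.Tendsto (fun r : ℝ => (r:ℂ) * e) (𝓝[>] (0:ℝ)) (𝓝 0) := by
      have hc : Continuous fun r : ℝ => (r:ℂ) * e :=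
        Complex.continuous_ofReal.mul continuous_const
      have := (hc.tendsto 0).mono_left (nhdsWithin_le_nhds (s := Set.Ioi (0:ℝ)))
      simpa using this
    have h1 := hTaylor.comp_tendsto htend
    have hnorm : ‖e‖ = 1 := Complex.norm_exp_ofReal_mul_I α
    refine (h1.congr' ?_ ?_)
    · filter_upwards [self_mem_nhdsWithin] with r hr
      simp only [Function.comp_apply]
      rw [re_poly_eval]
    · filter_upwards [self_mem_nhdsWithin] with r hr
      have hrpos : (0:ℝ) < r := hr
      simp only [Function.comp_apply, norm_mul, hnorm, mul_one, Complex.norm_real,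
        Real.norm_eq_abs, abs_of_pos hrpos]
  have h2q : 2 * q - 1 + 1 = 2 * q := by omega
  -- coefficient identities from (i), θ = 0
  have hcoef1 : ∀ j ≤ 2*q - 1,
      ∑ l ∈ Finset.range q,
        (c j * Complex.exp (((0 + 2*π*(l:ℝ)/(q:ℝ) : ℝ):ℂ) * Complex.I) ^ j).re = 0 := by
    have hsum := Asymptotics.IsLittleO.fun_sum
      (fun l (_ : l ∈ Finset.range q) => hdir (0 + 2*π*(l:ℝ)/(q:ℝ)))
    have hpoly : (fun r : ℝ => ∑ j ∈ Finset.range (2*q),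
        (∑ l ∈ Finset.range q,
          (c j * Complex.exp (((0 + 2*π*(l:ℝ)/(q:ℝ) : ℝ):ℂ) * Complex.I) ^ j).re) * r ^ j)
        =o[𝓝[>] (0:ℝ)] fun r : ℝ => r ^ (2*q-1) := by
      refine (hsum.neg_left.congr' ?_ (Filter.EventuallyEq.refl _ _))
      have hmem : Set.Ioc (0:ℝ) 1 ∈ 𝓝[>] (0:ℝ) := by
        refine Filter.inter_mem self_mem_nhdsWithin ?_
        exact mem_nhdsWithin_of_mem_nhds (Iic_mem_nhds one_pos)
      filter_upwards [hmem] with r hr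
      have hw0 := hi r 0 hr.1.le hr.2
      rw [Finset.sum_sub_distrib, hw0, zero_sub, neg_neg]
      rw [Finset.sum_comm]
      exact Finset.sum_congr rfl fun j _ => by rw [Finset.sum_mul]
    rw [← h2q] at hpoly
    exact poly_coeff_vanish _ _ hpoly
  have hc0' : c 0 = 0 := by
    have := hcoef1 0 (by omega)
    simp only [pow_zero, mul_one] at this
    rw [Finset.sum_const, Finset.card_range, nsmul_eq_mul] at this
    have hre : (c 0).re = 0 := by
      have hq0 : (q:ℝ) ≠ 0 := Nat.cast_ne_zero.2 (by omega)
      exact (mul_eq_zero.mp this).resolve_left hq0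
    exact Complex.ext (by simpa using hre) (by simpa using hc0)
  -- coefficient identities from (ii)
  have hcoef2 : ∀ θ : ℝ, ∀ j ≤ 2*q - 1,
      (c j * Complex.exp (((θ + 2*π/(k:ℝ) : ℝ):ℂ) * Complex.I) ^ j).re
        = (c j * Complex.exp (((θ:ℝ):ℂ) * Complex.I) ^ j).re := by
    intro θ
    have hdiff := (hdir (θ + 2*π/(k:ℝ))).sub (hdir θ)
    have hpoly : (fun r : ℝ => ∑ j ∈ Finset.range (2*q),
        ((c j * Complex.exp (((θ + 2*π/(k:ℝ) : ℝ):ℂ) * Complex.I) ^ j).re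
          - (c j * Complex.exp (((θ:ℝ):ℂ) * Complex.I) ^ j).re) * r ^ j)
        =o[𝓝[>] (0:ℝ)] fun r : ℝ => r ^ (2*q-1) := by
      refine (hdiff.neg_left.congr' ?_ (Filter.EventuallyEq.refl _ _))
      have hmem : Set.Ioc (0:ℝ) 1 ∈ 𝓝[>] (0:ℝ) := by
        refine Filter.inter_mem self_mem_nhdsWithin ?_
        exact mem_nhdsWithin_of_mem_nhds (Iic_mem_nhds one_pos)
      filter_upwards [hmem] with r hr
      have hw0 := hii r θ hr.1.le hr.2
      rw [hw0]
      have hsplit2 : ∑ j ∈ Finset.range (2*q),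
          ((c j * Complex.exp (((θ + 2*π/(k:ℝ) : ℝ):ℂ) * Complex.I) ^ j).re
            - (c j * Complex.exp (((θ:ℝ):ℂ) * Complex.I) ^ j).re) * r ^ j
          = (∑ j ∈ Finset.range (2*q),
              (c j * Complex.exp (((θ + 2*π/(k:ℝ) : ℝ):ℂ) * Complex.I) ^ j).re * r ^ j)
            - ∑ j ∈ Finset.range (2*q),
              (c j * Complex.exp (((θ:ℝ):ℂ) * Complex.I) ^ j).re * r ^ j := by
        rw [← Finset.sum_sub_distrib]
        exact Finset.sum_congr rfl fun j _ => by ring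
      rw [hsplit2]
      ring
    rw [← h2q] at hpoly
    intro j hj
    have := poly_coeff_vanish _ _ hpoly j hj
    linarith
  have hcj : ∀ j, 1 ≤ j → j ≤ q → c j = 0 := by
    intro j hj1 hjq
    set X : ℂ := Complex.exp (((2*π/(k:ℝ) : ℝ):ℂ) * Complex.I) with hX
    have hA : ∀ θ : ℝ, ((c j * (X ^ j - 1)) * Complex.exp ((θ:ℂ) * Complex.I) ^ j).re = 0 := by
      intro θ
      have h1 := hcoef2 θ j (by omega)
      have hsplit : Complex.exp (((θ + 2*π/(k:ℝ) : ℝ):ℂ) * Complex.I)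
          = Complex.exp (((θ:ℝ):ℂ) * Complex.I) * X := by
        rw [hX, ← Complex.exp_add]
        congr 1
        push_cast
        ring
      rw [hsplit, mul_pow] at h1
      have : (c j * (X ^ j - 1)) * Complex.exp ((θ:ℂ) * Complex.I) ^ j
          = c j * (Complex.exp (((θ:ℝ):ℂ) * Complex.I) ^ j * X ^ j)
            - c j * Complex.exp (((θ:ℝ):ℂ) * Complex.I) ^ j := by ring
      rw [this, Complex.sub_re, h1, sub_self]
    have hAzero : c j * (X ^ j - 1) = 0 := coeff_zero_of_re_rotation j hj1 _ hA
    have hXj : X ^ j ≠ 1 := by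
      have hXj_eq : X ^ j = Complex.exp (((2*π*j/(k:ℝ) : ℝ):ℂ) * Complex.I) := by
        rw [hX, ← Complex.exp_nat_mul]
        congr 1
        have hk0 : (k:ℂ) ≠ 0 := Nat.cast_ne_zero.2 (by omega)
        push_cast
        field_simp
      intro hone
      rw [hXj_eq] at hone
      have hre : Real.cos (2*π*j/(k:ℝ)) = 1 := by
        have := congrArg Complex.re hone
        rwa [Complex.exp_ofReal_mul_I_re] at this
      have hkpos : (0:ℝ) < k := by
        have : 0 < k := by omega
        exact_mod_cast this
      have hjpos : (0:ℝ) < j := by exact_mod_cast hj1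
      have hjk : (j:ℝ) < k := by exact_mod_cast lt_of_le_of_lt hjq hk
      have hb1 : 0 < 2*π*j/(k:ℝ) := by
        apply div_pos (by nlinarith [Real.pi_pos]) hkpos
      have hb2 : 2*π*j/(k:ℝ) < 2*π := by
        rw [div_lt_iff₀ hkpos]
        nlinarith [Real.pi_pos]
      have := (Real.cos_eq_one_iff_of_lt_of_lt (by linarith) hb2).1 hre
      linarith
    rcases mul_eq_zero.mp hAzero with h | h
    · exact h
    · exact absurd h (sub_ne_zero.2 hXj)
  have hpart1 : ∀ j ≤ q, c j = 0 := by
    intro j hjq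
    rcases Nat.eq_zero_or_pos j with rfl | hj
    · exact hc0'
    · exact hcj j hj hjq
  refine ⟨hpart1, ?_⟩
  intro M hM ξ hξ
  have hM0 : 0 ≤ M := le_trans (norm_nonneg _) (hM 0 (by simp))
  have hmem01 : Set.Ioc (0:ℝ) 1 ∈ 𝓝[>] (0:ℝ) := by
    refine Filter.inter_mem self_mem_nhdsWithin ?_
    exact mem_nhdsWithin_of_mem_nhds (Iic_mem_nhds one_pos)
  rcases eq_or_ne ξ 0 with rfl | hξ0
  · -- ξ = 0 : w 0 = 0
    have hw00 : w 0 = 0 := by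
      rw [isLittleO_iff] at hTaylor
      have h1 := (hTaylor one_pos).self_of_nhds
      have hs : (∑ j ∈ Finset.range (2*q), c j * (0:ℂ) ^ j) = c 0 := by
        rw [Finset.sum_eq_single 0 (fun b _ hb => by simp [zero_pow hb])
          (fun h => absurd (Finset.mem_range.2 (by omega)) h)]
        simp
      rw [hs, hc0'] at h1
      have h2q0 : 2*q - 1 ≠ 0 := by omega
      have habs : |w 0| ≤ 0 := by
        simpa [zero_pow h2q0, Real.norm_eq_abs] using h1
      exact abs_nonpos_iff.mp habs
    simp [hw00]
  · have hξ1 : ‖ξ‖ < 1 := mem_ball_zero_iff.mp hξ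
    set L : ℝ →L[ℝ] ℂ := ContinuousLinearMap.toSpanSingleton ℝ ξ with hL
    set g : ℝ → ℝ := w ∘ L with hgdef
    set u : Set ℝ := L ⁻¹' (Metric.closedBall 0 1) with hudef
    have hLt : ∀ t : ℝ, L t = (t:ℂ) * ξ := fun t => by
      simp [hL, ContinuousLinearMap.toSpanSingleton_apply, Complex.real_smul]
    have hsub : Icc (0:ℝ) 1 ⊆ u := by
      intro t ht
      simp only [hudef, Set.mem_preimage, mem_closedBall_zero_iff]
      rw [hLt, norm_mul, Complex.norm_real, Real.norm_eq_abs, _root_.abs_of_nonneg ht.1]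
      nlinarith [ht.1, ht.2, norm_nonneg ξ]
    have huconv : Convex ℝ u :=
      (convex_closedBall (0:ℂ) 1).linear_preimage (L : ℝ →ₗ[ℝ] ℂ)
    have hzero_mem : (0:ℝ) ∈ interior u := by
      apply mem_interior.2
      refine ⟨L ⁻¹' Metric.ball 0 1, fun x hx => Metric.ball_subset_closedBall hx,
        Metric.isOpen_ball.preimage L.continuous, ?_⟩
      simp only [Set.mem_preimage, mem_ball_zero_iff, hLt]
      simpa using one_pos
    have huniq : UniqueDiffOn ℝ u := uniqueDiffOn_convex huconv ⟨0, hzero_mem⟩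
    have hcb_uniq : UniqueDiffOn ℝ (Metric.closedBall (0:ℂ) 1) :=
      uniqueDiffOn_convex (convex_closedBall _ _)
        ⟨0, mem_interior.2 ⟨Metric.ball 0 1, Metric.ball_subset_closedBall,
          Metric.isOpen_ball, Metric.mem_ball_self one_pos⟩⟩
    have hle : ((q+1 : ℕ) : WithTop ℕ∞) ≤ ((2*q : ℕ) : WithTop ℕ∞) := by
      exact_mod_cast (by omega : q+1 ≤ 2*q)
    have hw' : ContDiffOn ℝ ((q+1 : ℕ) : WithTop ℕ∞) w (Metric.closedBall 0 1) := by
      apply hw.of_le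
      exact_mod_cast (by omega : q+1 ≤ 2*q)
    have hgC : ContDiffOn ℝ (q+1 : ℕ) g u :=
      hw'.comp (L.contDiff.contDiffOn) (fun x hx => hx)
    have hgI : ContDiffOn ℝ (q+1 : ℕ) g (Icc 0 1) := hgC.mono hsub
    have hC : ∀ t ∈ Icc (0:ℝ) 1,
        ‖iteratedDerivWithin (q+1) g (Icc (0:ℝ) 1) t‖ ≤ M * ‖ξ‖^(q+1) := by
      intro t ht
      have e1 : iteratedFDerivWithin ℝ (q+1) g (Icc (0:ℝ) 1) t
          = iteratedFDerivWithin ℝ (q+1) g u t := by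
        have h1 := ((hgC.ftaylorSeriesWithin huniq).mono hsub).eq_iteratedFDerivWithin_of_uniqueDiffOn
          le_rfl uniqueDiffOn_Icc_zero_one ht
        exact h1.symm
      have e2 : iteratedFDerivWithin ℝ (q+1) g u t
          = (iteratedFDerivWithin ℝ (q+1) w (Metric.closedBall 0 1) (L t)).compContinuousLinearMap
              (fun _ => L) :=
        L.iteratedFDerivWithin_comp_right hw hcb_uniq huniq (hsub ht) hle
      rw [iteratedDerivWithin_eq_iteratedFDerivWithin, e1, e2,
        ContinuousMultilinearMap.compContinuousLinearMap_apply]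
      have hL1 : (fun _ : Fin (q+1) => L 1) = fun _ : Fin (q+1) => ξ := by
        funext i; rw [hLt]; simp
      rw [hL1]
      calc ‖(iteratedFDerivWithin ℝ (q+1) w (Metric.closedBall 0 1) (L t)) (fun _ => ξ)‖
          ≤ ‖iteratedFDerivWithin ℝ (q+1) w (Metric.closedBall 0 1) (L t)‖
            * ∏ _i : Fin (q+1), ‖ξ‖ := ContinuousMultilinearMap.le_opNorm _ _
        _ = ‖iteratedFDerivWithin ℝ (q+1) w (Metric.closedBall 0 1) (L t)‖ * ‖ξ‖^(q+1) := by
            rw [Finset.prod_const, Finset.card_univ, Fintype.card_fin]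
        _ ≤ M * ‖ξ‖^(q+1) := by
            have := hM (L t) (hsub ht)
            gcongr
    have hTay : ∀ x ∈ Icc (0:ℝ) 1, ‖g x - taylorWithinEval g q (Icc (0:ℝ) 1) 0 x‖
        ≤ M * ‖ξ‖^(q+1) * (x - 0)^(q+1) / (Nat.factorial q) :=
      fun x hx => taylor_mean_remainder_bound zero_le_one hgI hx hC
    -- g is o(t^q) at 0⁺
    have hφ : Filter.Tendsto (fun t : ℝ => (t:ℂ) * ξ) (𝓝[>] (0:ℝ)) (𝓝 0) := by
      have hcont : Continuous fun t : ℝ => (t:ℂ) * ξ :=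
        Complex.continuous_ofReal.mul continuous_const
      have := (hcont.tendsto 0).mono_left (nhdsWithin_le_nhds (s := Set.Ioi (0:ℝ)))
      simpa using this
    have hgo : (fun t : ℝ => g t) =o[𝓝[>] (0:ℝ)] fun t => t ^ q := by
      have h1 := hTaylor.comp_tendsto hφ
      have h2 : (fun t : ℝ => ‖(t:ℂ) * ξ‖ ^ (2*q-1)) =O[𝓝[>] (0:ℝ)] fun t => t ^ q := by
        rw [isBigO_iff]
        refine ⟨‖ξ‖^(2*q-1), ?_⟩
        filter_upwards [hmem01] with t ht
        have ht0 : (0:ℝ) < t := ht.1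
        have hA : ‖‖(t:ℂ) * ξ‖ ^ (2*q-1)‖ = (t*‖ξ‖)^(2*q-1) := by
          rw [Real.norm_eq_abs, _root_.abs_of_nonneg (by positivity), norm_mul,
            Complex.norm_real, Real.norm_eq_abs, _root_.abs_of_pos ht0]
        have hB : ‖t ^ q‖ = t^q := by
          rw [Real.norm_eq_abs, _root_.abs_of_nonneg (pow_nonneg ht0.le q)]
        rw [hA, hB, mul_pow]
        have hle2 : t^(2*q-1) ≤ t^q := pow_le_pow_of_le_one ht0.le ht.2 (by omega)
        nlinarith [pow_nonneg (norm_nonneg ξ) (2*q-1), pow_nonneg ht0.le q,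
          mul_le_mul_of_nonneg_left hle2 (pow_nonneg (norm_nonneg ξ) (2*q-1))]
      have h3 : (fun t : ℝ => w ((t:ℂ)*ξ)
          - ∑ j ∈ Finset.range (2*q), (c j * ξ^j).re * t^j) =o[𝓝[>] (0:ℝ)] fun t => t^q := by
        refine ((h1.trans_isBigO h2).congr' ?_ (Filter.EventuallyEq.refl _ _))
        filter_upwards with t
        simp only [Function.comp_apply]
        rw [re_poly_eval]
      have h4 : (fun t : ℝ => ∑ j ∈ Finset.range (2*q), (c j * ξ^j).re * t^j)
          =o[𝓝[>] (0:ℝ)] fun t => t^q := by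
        apply Asymptotics.IsLittleO.fun_sum
        intro j hj
        rcases le_or_gt j q with hle' | hgt
        · have hcz : c j = 0 := hpart1 j hle'
          simpa [hcz] using (isLittleO_zero (fun t : ℝ => t^q) (𝓝[>] (0:ℝ)))
        · have h5 : (fun t:ℝ => t^j) =o[𝓝[>] (0:ℝ)] fun t => t^q :=
            (isLittleO_pow_pow hgt).mono nhdsWithin_le_nhds
          exact h5.const_mul_left _
      refine ((h3.add h4).congr' ?_ (Filter.EventuallyEq.refl _ _))
      filter_upwards with t
      simp only [hgdef, Function.comp_apply, hLt]
      ring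
    set a : ℕ → ℝ := fun j => ((Nat.factorial j : ℝ))⁻¹ * iteratedDerivWithin j g (Icc (0:ℝ) 1) 0 with hadef
    have hTeval : ∀ x : ℝ, taylorWithinEval g q (Icc (0:ℝ) 1) 0 x
        = ∑ j ∈ Finset.range (q+1), a j * x ^ j := by
      intro x
      rw [taylor_within_apply]
      refine Finset.sum_congr rfl fun j _ => ?_
      simp only [hadef, smul_eq_mul, sub_zero]
      ring
    have hTo : (fun x : ℝ => ∑ j ∈ Finset.range (q+1), a j * x ^ j)
        =o[𝓝[>] (0:ℝ)] fun t => t^q := by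
      have hdiffo : (fun x : ℝ => taylorWithinEval g q (Icc (0:ℝ) 1) 0 x - g x)
          =o[𝓝[>] (0:ℝ)] fun t => t^q := by
        have hbig : (fun x : ℝ => taylorWithinEval g q (Icc (0:ℝ) 1) 0 x - g x)
            =O[𝓝[>] (0:ℝ)] fun t => t^(q+1) := by
          rw [isBigO_iff]
          refine ⟨M * ‖ξ‖^(q+1) / (Nat.factorial q), ?_⟩
          filter_upwards [hmem01] with x hx
          have := hTay x ⟨hx.1.le, hx.2⟩
          rw [Real.norm_eq_abs, abs_sub_comm]
          rw [Real.norm_eq_abs, _root_.abs_of_nonneg (pow_nonneg hx.1.le (q+1))]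
          calc |g x - taylorWithinEval g q (Icc (0:ℝ) 1) 0 x|
              ≤ M * ‖ξ‖^(q+1) * (x - 0)^(q+1) / (Nat.factorial q) := this
            _ = M * ‖ξ‖^(q+1) / (Nat.factorial q) * x^(q+1) := by rw [sub_zero]; ring
        exact hbig.trans_isLittleO ((isLittleO_pow_pow (q.lt_succ_self)).mono nhdsWithin_le_nhds)
      refine ((hdiffo.add hgo).congr' ?_ (Filter.EventuallyEq.refl _ _))
      filter_upwards with x
      rw [← hTeval x]
      ring
    have hacoef := poly_coeff_vanish q a hTo
    have hT1 : taylorWithinEval g q (Icc (0:ℝ) 1) 0 1 = 0 := by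
      rw [hTeval]
      refine Finset.sum_eq_zero fun j hj => ?_
      rw [hacoef j (Finset.mem_range_succ_iff.mp hj)]
      ring
    have hfinal := hTay 1 (by norm_num)
    rw [hT1, sub_zero] at hfinal
    have hg1 : g 1 = w ξ := by
      simp only [hgdef, Function.comp_apply, hLt]
      norm_num
    rw [hg1, Real.norm_eq_abs] at hfinal
    calc |w ξ| ≤ M * ‖ξ‖^(q+1) * ((1:ℝ) - 0)^(q+1) / (Nat.factorial q) := hfinal
      _ ≤ M * ‖ξ‖^(q+1) := by
          rw [sub_zero, one_pow, mul_one]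
          apply div_le_self (by positivity)
          exact_mod_cast q.factorial_pos
end
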